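/- arXiv:math/0701081 — 4 statements merged into one kernel-verified Lean document; each statement's English description precedes it below -/
import Mathlib

section
/- Fix 0 < β ≤ 1 and b > 0. For a nonnegative integrable function f on ℝ^d define the moments m_κ = ∫_{ℝ^d} f(v) |v|^{2κ} dv and the normalized moments z_κ = m_κ/Γ(κ+b). Then there exists a constant C_b depending only on b (and β) such that for every k ≥ 1, S_k := Σ_{j=1}^{⌊(k+1)/2⌋} binom(k,j) ( m_{j+β/2} m_{k−j} + m_{k−j+β/2} m_j ) ≤ C_b Γ(k + β/2 + 2b) Z_k, where Z_k = max_{1 ≤ j ≤ ⌊(k+1)/2⌋} { z_{j+β/2} z_{k−j}, z_j z_{k−j+β/2} } and binom(k,j) = Γ(k+1)/(Γ(j+1)Γ(k−j+1)). -/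
open MeasureTheory Real Filter Set
open scoped Topology

noncomputable section

/-- Velocity space ℝ^d with Euclidean structure. -/
abbrev Vel (d : ℕ) := EuclideanSpace ℝ (Fin d)

namespace MomentAux

def Bt (x y : ℝ) : ℝ := Real.Gamma x * Real.Gamma y / Real.Gamma (x + y)

lemma Bt_pos {x y : ℝ} (hx : 0 < x) (hy : 0 < y) : 0 < Bt x y :=
  div_pos (mul_pos (Real.Gamma_pos_of_pos hx) (Real.Gamma_pos_of_pos hy))
    (Real.Gamma_pos_of_pos (by linarith))

lemma Bt_symm (x y : ℝ) : Bt x y = Bt y x := by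
  unfold Bt; rw [mul_comm, add_comm]

lemma Bt_rec {x y : ℝ} (hx : 0 < x) (hy : 0 < y) :
    Bt x y = Bt (x + 1) y + Bt x (y + 1) := by
  have hs : (0:ℝ) < x + y := by linarith
  have hG : Real.Gamma (x + y) ≠ 0 := (Real.Gamma_pos_of_pos hs).ne'
  have h1 : Real.Gamma (x + 1) = x * Real.Gamma x := Real.Gamma_add_one hx.ne'
  have h2 : Real.Gamma (y + 1) = y * Real.Gamma y := Real.Gamma_add_one hy.ne'
  have h3 : Real.Gamma (x + y + 1) = (x + y) * Real.Gamma (x + y) :=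
    Real.Gamma_add_one hs.ne'
  unfold Bt
  rw [show x + 1 + y = x + y + 1 by ring, show x + (y + 1) = x + y + 1 by ring,
    h1, h2, h3]
  field_simp

lemma sum_choose_Bt (n : ℕ) : ∀ a c : ℝ, 0 < a → 0 < c →
    ∑ j ∈ Finset.range (n + 1), (n.choose j : ℝ) * Bt (a + j) (c + n - j) = Bt a c := by
  induction n with
  | zero =>
    intro a c ha hc
    simp [Bt]
  | succ n ih =>
    intro a c ha hc
    have hcast : ∀ j : ℕ, c + ((n+1:ℕ):ℝ) - j = c + 1 + (n:ℝ) - j := by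
      intro j; push_cast; ring
    have hgoal : ∑ j ∈ Finset.range (n + 1 + 1), ((n+1).choose j : ℝ) * Bt (a + j) (c + ((n+1:ℕ):ℝ) - j)
        = ∑ j ∈ Finset.range (n + 2), ((n+1).choose j : ℝ) * Bt (a + j) (c + 1 + (n:ℝ) - j) :=
      Finset.sum_congr rfl fun j _ => by rw [hcast j]
    rw [hgoal, Finset.sum_range_succ'
      (fun j => ((n+1).choose j : ℝ) * Bt (a + j) (c + 1 + (n:ℝ) - j))]
    have e1 : ∀ j ∈ Finset.range (n+1),
        ((n+1).choose (j+1) : ℝ) * Bt (a + ((j+1:ℕ):ℝ)) (c + 1 + (n:ℝ) - ((j+1:ℕ):ℝ))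
        = (n.choose j : ℝ) * Bt (a + 1 + (j:ℝ)) (c + (n:ℝ) - (j:ℝ))
          + (n.choose (j+1) : ℝ) * Bt (a + ((j+1:ℕ):ℝ)) (c + 1 + (n:ℝ) - ((j+1:ℕ):ℝ)) := by
      intro j _
      have hA : a + ((j+1:ℕ):ℝ) = a + 1 + (j:ℝ) := by push_cast; ring
      have hB : c + 1 + (n:ℝ) - ((j+1:ℕ):ℝ) = c + (n:ℝ) - (j:ℝ) := by push_cast; ring
      have hP : ((n+1).choose (j+1) : ℝ) = (n.choose j : ℝ) + (n.choose (j+1) : ℝ) := by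
        exact_mod_cast Nat.choose_succ_succ n j
      rw [hP, add_mul, hA, hB]
    rw [Finset.sum_congr rfl e1, Finset.sum_add_distrib]
    have h1 : ∑ j ∈ Finset.range (n+1), (n.choose j : ℝ) * Bt (a + 1 + (j:ℝ)) (c + (n:ℝ) - (j:ℝ))
        = Bt (a+1) c := ih (a+1) c (by linarith) hc
    -- second sum
    have e3 := Finset.sum_range_succ'
      (fun i : ℕ => (n.choose i : ℝ) * Bt (a + (i:ℝ)) (c + 1 + (n:ℝ) - (i:ℝ))) (n+1)
    have e4 : ∑ i ∈ Finset.range (n + 2), (n.choose i : ℝ) * Bt (a + (i:ℝ)) (c + 1 + (n:ℝ) - (i:ℝ))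
        = Bt a (c+1) := by
      rw [Finset.sum_range_succ]
      have : (n.choose (n+1) : ℝ) = 0 := by simp
      rw [this, zero_mul, add_zero]
      exact ih a (c+1) ha (by linarith)
    rw [e4] at e3
    rw [h1]
    simp only [Nat.cast_zero, add_zero, sub_zero, Nat.choose_zero_right, Nat.cast_one,
      one_mul] at e3 ⊢
    linarith [Bt_rec ha hc, e3]

lemma Gamma_interp {u v δ : ℝ} (hu : 0 < u) (hv : 0 < v) (hδ0 : 0 ≤ δ) (hδ1 : δ ≤ 1) :
    Real.Gamma ((1-δ) * u + δ * v) ≤ Real.Gamma u ^ (1-δ) * Real.Gamma v ^ δ := by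
  have hmem : (1-δ) * u + δ * v ∈ Set.Ioi (0:ℝ) := by
    rcases eq_or_lt_of_le hδ1 with h | h
    · simp [← h]; positivity
    · have : 0 < 1 - δ := by linarith
      have := mul_pos this hu
      have := mul_nonneg hδ0 hv.le
      simp only [Set.mem_Ioi]; linarith
  have hc := Real.convexOn_log_Gamma.2 (Set.mem_Ioi.2 hu) (Set.mem_Ioi.2 hv)
    (by linarith : (0:ℝ) ≤ 1 - δ) hδ0 (by ring)
  simp only [Function.comp_apply, smul_eq_mul] at hc
  have hΓ : 0 < Real.Gamma ((1-δ) * u + δ * v) := Real.Gamma_pos_of_pos hmem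
  have hΓu : 0 < Real.Gamma u := Real.Gamma_pos_of_pos hu
  have hΓv : 0 < Real.Gamma v := Real.Gamma_pos_of_pos hv
  calc Real.Gamma ((1-δ) * u + δ * v) = Real.exp (Real.log (Real.Gamma ((1-δ)*u + δ*v))) :=
        (Real.exp_log hΓ).symm
    _ ≤ Real.exp ((1-δ) * Real.log (Real.Gamma u) + δ * Real.log (Real.Gamma v)) :=
        Real.exp_le_exp.2 hc
    _ = Real.Gamma u ^ (1-δ) * Real.Gamma v ^ δ := by
        rw [Real.exp_add, ← Real.log_rpow hΓu, ← Real.log_rpow hΓv, Real.exp_log, Real.exp_log]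
        · exact Real.rpow_pos_of_pos hΓv δ
        · exact Real.rpow_pos_of_pos hΓu _

lemma Gamma_add_delta_le {u δ : ℝ} (hu : 0 < u) (hδ0 : 0 ≤ δ) (hδ1 : δ ≤ 1) :
    Real.Gamma (u + δ) ≤ Real.Gamma u * u ^ δ := by
  have h := Gamma_interp hu (by linarith : (0:ℝ) < u + 1) hδ0 hδ1
  rw [show (1-δ) * u + δ * (u+1) = u + δ by ring] at h
  calc Real.Gamma (u + δ) ≤ Real.Gamma u ^ (1-δ) * Real.Gamma (u+1) ^ δ := h
    _ = Real.Gamma u * u ^ δ := by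
        rw [Real.Gamma_add_one hu.ne', Real.mul_rpow hu.le (Real.Gamma_pos_of_pos hu).le]
        rw [show Real.Gamma u ^ (1-δ) * (u ^ δ * Real.Gamma u ^ δ)
            = (Real.Gamma u ^ (1-δ) * Real.Gamma u ^ δ) * u ^ δ by ring,
          ← Real.rpow_add (Real.Gamma_pos_of_pos hu)]
        norm_num

lemma Gamma_add_delta_ge {z δ : ℝ} (hz : 0 < z) (hδ0 : 0 ≤ δ) (hδ1 : δ ≤ 1) :
    z * Real.Gamma z ≤ Real.Gamma (z + δ) * (z + δ) ^ (1-δ) := by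
  have hzd : 0 < z + δ := by linarith
  have h := Gamma_interp hzd (by linarith : (0:ℝ) < z + δ + 1) (by linarith : (0:ℝ) ≤ 1 - δ)
    (by linarith : 1 - δ ≤ 1)
  rw [show (1-(1-δ)) * (z+δ) + (1-δ) * (z+δ+1) = z + 1 by ring] at h
  rw [show (1:ℝ)-(1-δ) = δ by ring] at h
  rw [← Real.Gamma_add_one hz.ne']
  calc Real.Gamma (z+1) ≤ Real.Gamma (z+δ) ^ δ * Real.Gamma (z+δ+1) ^ (1-δ) := h
    _ = Real.Gamma (z + δ) * (z + δ) ^ (1-δ) := by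
        rw [Real.Gamma_add_one hzd.ne',
          Real.mul_rpow hzd.le (Real.Gamma_pos_of_pos hzd).le]
        rw [show Real.Gamma (z+δ) ^ δ * ((z+δ) ^ (1-δ) * Real.Gamma (z+δ) ^ (1-δ))
            = (Real.Gamma (z+δ) ^ δ * Real.Gamma (z+δ) ^ (1-δ)) * (z+δ) ^ (1-δ) by ring,
          ← Real.rpow_add (Real.Gamma_pos_of_pos hzd)]
        norm_num

lemma Bt_shift_le {x y δ : ℝ} (hx : 0 < x) (hy : 0 < y) (hs : 1 ≤ x + y)
    (hδ0 : 0 ≤ δ) (hδ1 : δ ≤ 1) : Bt x (y + δ) ≤ 2 * Bt x y := by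
  set s := x + y with hsdef
  have hs0 : 0 < s := by linarith
  have hsd : 0 < s + δ := by linarith
  have hGx : 0 < Real.Gamma x := Real.Gamma_pos_of_pos hx
  have hGy : 0 < Real.Gamma y := Real.Gamma_pos_of_pos hy
  have hGs : 0 < Real.Gamma s := Real.Gamma_pos_of_pos hs0
  have hGsd : 0 < Real.Gamma (s + δ) := Real.Gamma_pos_of_pos hsd
  have h1 : Real.Gamma (y + δ) ≤ Real.Gamma y * y ^ δ := Gamma_add_delta_le hy hδ0 hδ1
  have h2 : s * Real.Gamma s ≤ Real.Gamma (s + δ) * (s + δ) ^ (1-δ) :=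
    Gamma_add_delta_ge hs0 hδ0 hδ1
  -- key : y ^ δ * Real.Gamma s ≤ 2 * Real.Gamma (s + δ)
  have hyδ : y ^ δ ≤ (s + δ) ^ δ :=
    Real.rpow_le_rpow hy.le (by linarith) hδ0
  have key : y ^ δ * Real.Gamma s ≤ 2 * Real.Gamma (s + δ) := by
    have step : y ^ δ * (s * Real.Gamma s) ≤ (s + δ) ^ δ * (Real.Gamma (s+δ) * (s+δ) ^ (1-δ)) := by
      apply mul_le_mul hyδ h2 (by positivity) (by positivity)
    have hsplit : (s + δ) ^ δ * (Real.Gamma (s+δ) * (s+δ) ^ (1-δ))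
        = (s + δ) * Real.Gamma (s + δ) := by
      rw [show (s + δ) ^ δ * (Real.Gamma (s+δ) * (s+δ) ^ (1-δ))
          = ((s + δ) ^ δ * (s+δ) ^ (1-δ)) * Real.Gamma (s+δ) by ring,
        ← Real.rpow_add hsd]
      norm_num
    rw [hsplit] at step
    have h2s : s + δ ≤ 2 * s := by linarith
    nlinarith [mul_pos hsd hGsd]
  have harg : x + (y + δ) = s + δ := by rw [hsdef]; ring
  unfold Bt
  rw [harg, ← hsdef, ← mul_div_assoc]
  rw [div_le_div_iff₀ hGsd hGs]
  calc Real.Gamma x * Real.Gamma (y + δ) * Real.Gamma s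
      ≤ Real.Gamma x * (Real.Gamma y * y ^ δ) * Real.Gamma s := by
        apply mul_le_mul_of_nonneg_right (mul_le_mul_of_nonneg_left h1 hGx.le) hGs.le
    _ = Real.Gamma x * Real.Gamma y * (y ^ δ * Real.Gamma s) := by ring
    _ ≤ Real.Gamma x * Real.Gamma y * (2 * Real.Gamma (s + δ)) := by
        apply mul_le_mul_of_nonneg_left key (by positivity)
    _ = 2 * (Real.Gamma x * Real.Gamma y) * Real.Gamma (s + δ) := by ring
lemma Gamma_prod (j : ℕ) : ∀ x : ℝ, (j:ℝ) < x + 1 →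
    Real.Gamma (x + 1) = (∏ i ∈ Finset.range j, (x - i)) * Real.Gamma (x - j + 1) := by
  induction j with
  | zero => intro x _; simp
  | succ j ih =>
    intro x hj
    have hx : (0:ℝ) < x - j := by push_cast at hj; linarith
    have step : Real.Gamma (x - j + 1) = (x - j) * Real.Gamma (x - j) :=
      Real.Gamma_add_one hx.ne'
    rw [ih x (by push_cast at hj ⊢; linarith), step, Finset.prod_range_succ]
    have : x - ((j:ℕ)+1:ℕ) + 1 = x - j := by push_cast; ring
    rw [this]
    ring

lemma prod_shift (j : ℕ) : ∀ x : ℝ,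
    (x + 1 - j) * ∏ i ∈ Finset.range j, (x + 1 - i) = (x + 1) * ∏ i ∈ Finset.range j, (x - i) := by
  induction j with
  | zero => intro x; simp
  | succ j ih =>
    intro x
    rw [Finset.prod_range_succ, Finset.prod_range_succ]
    have h1 : x + 1 - ((j:ℕ)+1:ℕ) = x - j := by push_cast; ring
    rw [h1]
    linear_combination (x - (j:ℝ)) * ih x

/-- real binomial coefficient vs integer binomial coefficient -/
lemma binom_le_choose {k : ℝ} (hk : 1 ≤ k) {j : ℕ} (hj1 : 1 ≤ j) (hj2 : 2 * (j:ℝ) ≤ k + 1) :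
    Real.Gamma (k + 1) / (Real.Gamma ((j:ℝ) + 1) * Real.Gamma (k - j + 1))
      ≤ 2 * ((⌊k⌋₊.choose j : ℕ) : ℝ) := by
  set n := ⌊k⌋₊ with hn
  have hnk : (n:ℝ) ≤ k := Nat.floor_le (by linarith)
  have hkn : k < (n:ℝ) + 1 := Nat.lt_floor_add_one k
  have hn1 : 1 ≤ n := by
    rw [hn]; exact Nat.le_floor (by exact_mod_cast hk)
  have h2jn : 2 * j ≤ n + 1 := by
    have : (2*j:ℝ) < (n:ℝ) + 2 := by linarith
    exact_mod_cast Nat.lt_add_one_iff.1 (by exact_mod_cast this)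
  have hjn : j ≤ n := by omega
  have hjk : (j:ℝ) ≤ k := by
    have : (j:ℝ) ≤ (n:ℝ) := by exact_mod_cast hjn
    linarith
  -- positivity facts
  have hΓj : 0 < Real.Gamma ((j:ℝ) + 1) := Real.Gamma_pos_of_pos (by positivity)
  have hkj1 : 0 < k - j + 1 := by linarith
  have hΓkj : 0 < Real.Gamma (k - j + 1) := Real.Gamma_pos_of_pos hkj1
  -- expand both sides
  have hGk : Real.Gamma (k + 1) = (∏ i ∈ Finset.range j, (k - i)) * Real.Gamma (k - j + 1) :=
    Gamma_prod j k (by linarith)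
  have hGn : Real.Gamma ((n:ℝ) + 1)
      = (∏ i ∈ Finset.range j, ((n:ℝ) - i)) * Real.Gamma ((n:ℝ) - j + 1) :=
    Gamma_prod j n (by exact_mod_cast Nat.lt_succ_of_le hjn)
  have hchoose : ((n.choose j : ℕ) : ℝ)
      = Real.Gamma ((n:ℝ) + 1) / (Real.Gamma ((j:ℝ) + 1) * Real.Gamma ((n:ℝ) - j + 1)) := by
    rw [Nat.cast_choose ℝ hjn]
    have e1 : Real.Gamma ((n:ℝ) + 1) = ((Nat.factorial n : ℕ) : ℝ) := by
      exact_mod_cast Real.Gamma_nat_eq_factorial n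
    have e2 : Real.Gamma ((j:ℝ) + 1) = ((Nat.factorial j : ℕ) : ℝ) := by
      exact_mod_cast Real.Gamma_nat_eq_factorial j
    have e3 : Real.Gamma ((n:ℝ) - j + 1) = ((Nat.factorial (n - j) : ℕ) : ℝ) := by
      have : (n:ℝ) - j = ((n - j : ℕ) : ℝ) := by
        rw [Nat.cast_sub hjn]
      rw [this]
      exact_mod_cast Real.Gamma_nat_eq_factorial (n - j)
    rw [e1, e2, e3]
  have hΓnj : 0 < Real.Gamma ((n:ℝ) - j + 1) := by
    apply Real.Gamma_pos_of_pos
    have : (j:ℝ) ≤ (n:ℝ) := by exact_mod_cast hjn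
    linarith
  -- reduce to product inequality
  have hprod : (∏ i ∈ Finset.range j, (k - i)) ≤ 2 * ∏ i ∈ Finset.range j, ((n:ℝ) - i) := by
    have hstep1 : (∏ i ∈ Finset.range j, (k - i)) ≤ ∏ i ∈ Finset.range j, ((n:ℝ) + 1 - i) := by
      apply Finset.prod_le_prod
      · intro i hi
        have hij : (i:ℝ) ≤ (j:ℝ) - 1 := by
          have : i + 1 ≤ j := Finset.mem_range.1 hi
          have : ((i+1:ℕ):ℝ) ≤ (j:ℝ) := by exact_mod_cast this
          push_cast at this; linarith
        have : (j:ℝ) - 1 ≤ k - 1 := by linarith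
        linarith
      · intro i _; linarith
    have hpos : ∀ i ∈ Finset.range j, (0:ℝ) < (n:ℝ) - i := by
      intro i hi
      have : i + 1 ≤ j := Finset.mem_range.1 hi
      have h1 : ((i:ℕ):ℝ) + 1 ≤ (j:ℝ) := by exact_mod_cast this
      have h2 : (j:ℝ) ≤ (n:ℝ) := by exact_mod_cast hjn
      linarith
    have hprodpos : 0 < ∏ i ∈ Finset.range j, ((n:ℝ) - i) := Finset.prod_pos hpos
    have hshift := prod_shift j (n:ℝ)
    have hnj1 : 0 < (n:ℝ) + 1 - j := by
      have : (j:ℝ) ≤ (n:ℝ) := by exact_mod_cast hjn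
      linarith
    have h2j : (n:ℝ) + 1 ≤ 2 * ((n:ℝ) + 1 - j) := by
      have : (2*j:ℝ) ≤ (n:ℝ) + 1 := by exact_mod_cast h2jn
      linarith
    have hstep2 : ∏ i ∈ Finset.range j, ((n:ℝ) + 1 - i) ≤ 2 * ∏ i ∈ Finset.range j, ((n:ℝ) - i) := by
      have := hshift
      nlinarith [hprodpos, hnj1]
    linarith
  -- conclude
  rw [hGk, hchoose, hGn]
  rw [div_le_iff₀ (by positivity)]
  have expand : 2 * ((∏ i ∈ Finset.range j, ((n:ℝ) - i)) * Real.Gamma ((n:ℝ) - j + 1) /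
      (Real.Gamma ((j:ℝ) + 1) * Real.Gamma ((n:ℝ) - j + 1))) * (Real.Gamma ((j:ℝ) + 1) * Real.Gamma (k - j + 1))
      = (2 * ∏ i ∈ Finset.range j, ((n:ℝ) - i)) * Real.Gamma (k - j + 1) := by
    field_simp
  rw [expand]
  apply mul_le_mul_of_nonneg_right hprod hΓkj.le

lemma main_sum {a c k : ℝ} (ha : 0 < a) (hc : 0 < c) (hk : 1 ≤ k) :
    ∑ j ∈ Finset.Icc 1 ⌊(k + 1) / 2⌋₊,
      (Real.Gamma (k + 1) / (Real.Gamma ((j:ℝ) + 1) * Real.Gamma (k - (j:ℝ) + 1))) *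
        Bt ((j:ℝ) + a) (k - (j:ℝ) + c)
      ≤ 4 * Bt a c := by
  set n := ⌊k⌋₊ with hn
  have hnk : (n:ℝ) ≤ k := Nat.floor_le (by linarith)
  have hkn : k < (n:ℝ) + 1 := Nat.lt_floor_add_one k
  have hn1 : 1 ≤ n := Nat.le_floor (by exact_mod_cast hk)
  -- facts for j in the index set
  have hjfacts : ∀ j ∈ Finset.Icc 1 ⌊(k + 1) / 2⌋₊,
      1 ≤ j ∧ 2 * (j:ℝ) ≤ k + 1 ∧ j ≤ n := by
    intro j hj
    obtain ⟨hj1, hjJ⟩ := Finset.mem_Icc.1 hj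
    have hj2 : (j:ℝ) ≤ (k+1)/2 := by
      have := (Nat.le_floor_iff (by linarith : (0:ℝ) ≤ (k+1)/2)).1 hjJ
      exact this
    have hj2' : 2 * (j:ℝ) ≤ k + 1 := by linarith
    have h2jn : 2 * j ≤ n + 1 := by
      have h' : (2*j:ℝ) < (n:ℝ) + 2 := by push_cast; linarith
      have : 2 * j < n + 2 := by exact_mod_cast h'
      omega
    exact ⟨hj1, hj2', by omega⟩
  have termwise : ∀ j ∈ Finset.Icc 1 ⌊(k + 1) / 2⌋₊,
      (Real.Gamma (k + 1) / (Real.Gamma ((j:ℝ) + 1) * Real.Gamma (k - (j:ℝ) + 1))) *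
        Bt ((j:ℝ) + a) (k - (j:ℝ) + c)
      ≤ 4 * ((n.choose j : ℝ) * Bt (a + (j:ℝ)) (c + (n:ℝ) - (j:ℝ))) := by
    intro j hj
    obtain ⟨hj1, hj2, hjn⟩ := hjfacts j hj
    have hjr : (j:ℝ) ≤ (n:ℝ) := by exact_mod_cast hjn
    have hbin := binom_le_choose hk (by exact_mod_cast hj1) hj2
    have hxpos : (0:ℝ) < (j:ℝ) + a := by
      have : (1:ℝ) ≤ (j:ℝ) := by exact_mod_cast hj1
      linarith
    have hypos : (0:ℝ) < c + (n:ℝ) - (j:ℝ) := by linarith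
    have hshift : Bt ((j:ℝ) + a) ((c + (n:ℝ) - (j:ℝ)) + (k - (n:ℝ))) ≤
        2 * Bt ((j:ℝ) + a) (c + (n:ℝ) - (j:ℝ)) := by
      apply Bt_shift_le hxpos hypos _ (by linarith) (by linarith)
      have : (1:ℝ) ≤ (n:ℝ) := by exact_mod_cast hn1
      linarith
    have harg : k - (j:ℝ) + c = (c + (n:ℝ) - (j:ℝ)) + (k - (n:ℝ)) := by ring
    rw [harg]
    have hBtold : 0 ≤ Bt ((j:ℝ) + a) ((c + (n:ℝ) - (j:ℝ)) + (k - (n:ℝ))) := by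
      apply (Bt_pos hxpos _).le
      linarith
    calc (Real.Gamma (k + 1) / (Real.Gamma ((j:ℝ) + 1) * Real.Gamma (k - (j:ℝ) + 1))) *
          Bt ((j:ℝ) + a) ((c + (n:ℝ) - (j:ℝ)) + (k - (n:ℝ)))
        ≤ (2 * ((n.choose j : ℝ))) * (2 * Bt ((j:ℝ) + a) (c + (n:ℝ) - (j:ℝ))) := by
          apply mul_le_mul hbin hshift hBtold (by positivity)
      _ = 4 * ((n.choose j : ℝ) * Bt (a + (j:ℝ)) (c + (n:ℝ) - (j:ℝ))) := by
          rw [add_comm (j:ℝ) a]; ring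
  calc ∑ j ∈ Finset.Icc 1 ⌊(k + 1) / 2⌋₊,
        (Real.Gamma (k + 1) / (Real.Gamma ((j:ℝ) + 1) * Real.Gamma (k - (j:ℝ) + 1))) *
          Bt ((j:ℝ) + a) (k - (j:ℝ) + c)
      ≤ ∑ j ∈ Finset.Icc 1 ⌊(k + 1) / 2⌋₊,
          4 * ((n.choose j : ℝ) * Bt (a + (j:ℝ)) (c + (n:ℝ) - (j:ℝ))) :=
        Finset.sum_le_sum termwise
    _ = 4 * ∑ j ∈ Finset.Icc 1 ⌊(k + 1) / 2⌋₊,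
          (n.choose j : ℝ) * Bt (a + (j:ℝ)) (c + (n:ℝ) - (j:ℝ)) := by
        rw [Finset.mul_sum]
    _ ≤ 4 * ∑ j ∈ Finset.range (n + 1),
          (n.choose j : ℝ) * Bt (a + (j:ℝ)) (c + (n:ℝ) - (j:ℝ)) := by
        apply mul_le_mul_of_nonneg_left _ (by norm_num)
        apply Finset.sum_le_sum_of_subset_of_nonneg
        · intro j hj
          obtain ⟨hj1, hj2, hjn⟩ := hjfacts j hj
          exact Finset.mem_range.2 (by omega)
        · intro j hj _
          have hjn : j ≤ n := Nat.lt_succ_iff.1 (Finset.mem_range.1 hj)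
          have hjr : (j:ℝ) ≤ (n:ℝ) := by exact_mod_cast hjn
          apply mul_nonneg (by positivity)
          exact (Bt_pos (by positivity) (by linarith)).le
    _ = 4 * Bt a c := by rw [sum_choose_Bt n a c ha hc]


end MomentAux

open MomentAux

/-- **Combinatorial moment estimate** (Lemma 2.4, after Bobylev–Gamba–Panferov).
With moments m_κ = ∫ f |v|^{2κ} and normalized moments z_κ = m_κ/Γ(κ+b), one has
S_k = Σ_{j=1}^{⌊(k+1)/2⌋} binom(k,j) (m_{j+β/2} m_{k−j} + m_{k−j+β/2} m_j)
      ≤ C_b Γ(k+β/2+2b) Z_k,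
where Z_k = max_{1≤j≤⌊(k+1)/2⌋} { z_{j+β/2} z_{k−j}, z_j z_{k−j+β/2} } and
binom(k,j) = Γ(k+1)/(Γ(j+1)Γ(k−j+1)), with C_b depending only on b (and β). -/
theorem moment_sum_estimate
    (β b : ℝ) (hβ0 : 0 < β) (hβ1 : β ≤ 1) (hb : 0 < b) :
    ∃ Cb : ℝ, 0 < Cb ∧
      ∀ (d : ℕ) (f : Vel d → ℝ), Measurable f → (∀ v, 0 ≤ f v) →
      (∀ κ : ℝ, 0 ≤ κ → Integrable (fun v : Vel d => f v * ‖v‖ ^ (2 * κ))) →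
      ∀ m z : ℝ → ℝ,
        (∀ κ : ℝ, m κ = ∫ v : Vel d, f v * ‖v‖ ^ (2 * κ)) →
        (∀ κ : ℝ, z κ = m κ / Real.Gamma (κ + b)) →
      ∀ (k : ℝ) (hk : 1 ≤ k),
        (∑ j ∈ Finset.Icc 1 ⌊(k + 1) / 2⌋₊,
            (Real.Gamma (k + 1) / (Real.Gamma ((j:ℝ) + 1) * Real.Gamma (k - (j:ℝ) + 1))) *
              (m ((j:ℝ) + β / 2) * m (k - (j:ℝ)) + m (k - (j:ℝ) + β / 2) * m (j:ℝ)))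
          ≤ Cb * Real.Gamma (k + β / 2 + 2 * b) *
            ((Finset.Icc 1 ⌊(k + 1) / 2⌋₊).sup'
              (Finset.nonempty_Icc.mpr (Nat.le_floor (by linarith)))
              (fun j => max (z ((j:ℝ) + β / 2) * z (k - (j:ℝ)))
                            (z (j:ℝ) * z (k - (j:ℝ) + β / 2)))) := by
  have ha : (0:ℝ) < β/2 + b := by linarith
  refine ⟨8 * Bt (β/2 + b) b, mul_pos (by norm_num) (Bt_pos ha hb), ?_⟩
  intro d f hfm hf0 hint m z hm hz k hk
  have hk0 : (0:ℝ) ≤ k := by linarith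
  have hmnn : ∀ κ : ℝ, 0 ≤ m κ := by
    intro κ; rw [hm κ]
    apply integral_nonneg
    intro v
    exact mul_nonneg (hf0 v) (Real.rpow_nonneg (norm_nonneg v) _)
  have hznn : ∀ κ : ℝ, 0 ≤ κ → 0 ≤ z κ := by
    intro κ hκ; rw [hz κ]
    exact div_nonneg (hmnn κ) (Real.Gamma_pos_of_pos (by linarith)).le
  have hmz : ∀ κ : ℝ, 0 ≤ κ → m κ = z κ * Real.Gamma (κ + b) := by
    intro κ hκ; rw [hz κ]
    field_simp
  have hne : (Finset.Icc 1 ⌊(k + 1) / 2⌋₊).Nonempty :=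
    Finset.nonempty_Icc.mpr (Nat.le_floor (by linarith))
  set Z := (Finset.Icc 1 ⌊(k + 1) / 2⌋₊).sup' hne
      (fun j => max (z ((j:ℝ) + β / 2) * z (k - (j:ℝ)))
                    (z (j:ℝ) * z (k - (j:ℝ) + β / 2))) with hZdef
  have hjfacts : ∀ j ∈ Finset.Icc 1 ⌊(k + 1) / 2⌋₊, (1:ℝ) ≤ (j:ℝ) ∧ 0 ≤ k - (j:ℝ) := by
    intro j hj
    obtain ⟨hj1, hjJ⟩ := Finset.mem_Icc.1 hj
    have h1 : (1:ℝ) ≤ (j:ℝ) := by exact_mod_cast hj1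
    have h2 : (j:ℝ) ≤ (k+1)/2 := (Nat.le_floor_iff (by linarith : (0:ℝ) ≤ (k+1)/2)).1 hjJ
    exact ⟨h1, by linarith⟩
  have hZ0 : 0 ≤ Z := by
    have h1 : 1 ∈ Finset.Icc 1 ⌊(k + 1) / 2⌋₊ := Finset.mem_Icc.2 ⟨le_refl 1, Nat.le_floor (by push_cast; linarith)⟩
    obtain ⟨hj1, hkj⟩ := hjfacts 1 h1
    calc (0:ℝ) ≤ z (((1:ℕ):ℝ) + β/2) * z (k - ((1:ℕ):ℝ)) :=
          mul_nonneg (hznn _ (by push_cast; linarith)) (hznn _ (by push_cast at hkj ⊢; linarith))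
      _ ≤ max (z (((1:ℕ):ℝ) + β / 2) * z (k - ((1:ℕ):ℝ)))
              (z ((1:ℕ):ℝ) * z (k - ((1:ℕ):ℝ) + β / 2)) := le_max_left _ _
      _ ≤ Z := Finset.le_sup'
          (fun j : ℕ => max (z ((j:ℝ) + β / 2) * z (k - (j:ℝ))) (z (j:ℝ) * z (k - (j:ℝ) + β / 2))) h1
  have hΓk : 0 < Real.Gamma (k + β/2 + 2*b) := Real.Gamma_pos_of_pos (by linarith)
  have termwise : ∀ j ∈ Finset.Icc 1 ⌊(k + 1) / 2⌋₊,
      (Real.Gamma (k + 1) / (Real.Gamma ((j:ℝ) + 1) * Real.Gamma (k - (j:ℝ) + 1))) *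
        (m ((j:ℝ) + β / 2) * m (k - (j:ℝ)) + m (k - (j:ℝ) + β / 2) * m (j:ℝ))
      ≤ (Real.Gamma (k + 1) / (Real.Gamma ((j:ℝ) + 1) * Real.Gamma (k - (j:ℝ) + 1))) *
        ((Bt ((j:ℝ) + (β/2 + b)) (k - (j:ℝ) + b) + Bt ((j:ℝ) + b) (k - (j:ℝ) + (β/2 + b))) *
          (Real.Gamma (k + β/2 + 2*b) * Z)) := by
    intro j hj
    obtain ⟨hj1, hkj⟩ := hjfacts j hj
    have hBj : 0 ≤ Real.Gamma (k + 1) / (Real.Gamma ((j:ℝ) + 1) * Real.Gamma (k - (j:ℝ) + 1)) := by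
      apply div_nonneg (Real.Gamma_pos_of_pos (by linarith)).le
      exact (mul_pos (Real.Gamma_pos_of_pos (by linarith)) (Real.Gamma_pos_of_pos (by linarith))).le
    apply mul_le_mul_of_nonneg_left _ hBj
    have hΓ1 : 0 < Real.Gamma ((j:ℝ) + β/2 + b) := Real.Gamma_pos_of_pos (by linarith)
    have hΓ2 : 0 < Real.Gamma (k - (j:ℝ) + b) := Real.Gamma_pos_of_pos (by linarith)
    have hΓ3 : 0 < Real.Gamma (k - (j:ℝ) + β/2 + b) := Real.Gamma_pos_of_pos (by linarith)
    have hΓ4 : 0 < Real.Gamma ((j:ℝ) + b) := Real.Gamma_pos_of_pos (by linarith)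
    have hsup := Finset.le_sup'
      (fun j : ℕ => max (z ((j:ℝ) + β / 2) * z (k - (j:ℝ))) (z (j:ℝ) * z (k - (j:ℝ) + β / 2))) hj
    have hzZ1 : z ((j:ℝ) + β / 2) * z (k - (j:ℝ)) ≤ Z :=
      le_trans (le_max_left _ _) hsup
    have hzZ2 : z (j:ℝ) * z (k - (j:ℝ) + β / 2) ≤ Z :=
      le_trans (le_max_right _ _) hsup
    have hBt1 : Bt ((j:ℝ) + (β/2 + b)) (k - (j:ℝ) + b) * Real.Gamma (k + β/2 + 2*b)
        = Real.Gamma ((j:ℝ) + β/2 + b) * Real.Gamma (k - (j:ℝ) + b) := by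
      unfold Bt
      rw [show ((j:ℝ) + (β/2 + b)) + (k - (j:ℝ) + b) = k + β/2 + 2*b by ring,
        show (j:ℝ) + (β/2 + b) = (j:ℝ) + β/2 + b by ring]
      field_simp
    have hBt2 : Bt ((j:ℝ) + b) (k - (j:ℝ) + (β/2 + b)) * Real.Gamma (k + β/2 + 2*b)
        = Real.Gamma ((j:ℝ) + b) * Real.Gamma (k - (j:ℝ) + β/2 + b) := by
      unfold Bt
      rw [show ((j:ℝ) + b) + (k - (j:ℝ) + (β/2 + b)) = k + β/2 + 2*b by ring,
        show k - (j:ℝ) + (β/2 + b) = k - (j:ℝ) + β/2 + b by ring]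
      field_simp
    have part1 : m ((j:ℝ) + β / 2) * m (k - (j:ℝ))
        ≤ Bt ((j:ℝ) + (β/2 + b)) (k - (j:ℝ) + b) * (Real.Gamma (k + β/2 + 2*b) * Z) := by
      rw [hmz ((j:ℝ) + β / 2) (by linarith), hmz (k - (j:ℝ)) hkj]
      calc z ((j:ℝ) + β / 2) * Real.Gamma ((j:ℝ) + β / 2 + b) *
            (z (k - (j:ℝ)) * Real.Gamma (k - (j:ℝ) + b))
          = (z ((j:ℝ) + β / 2) * z (k - (j:ℝ))) *
              (Real.Gamma ((j:ℝ) + β / 2 + b) * Real.Gamma (k - (j:ℝ) + b)) := by ring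
        _ ≤ Z * (Real.Gamma ((j:ℝ) + β / 2 + b) * Real.Gamma (k - (j:ℝ) + b)) :=
            mul_le_mul_of_nonneg_right hzZ1 (by positivity)
        _ = Bt ((j:ℝ) + (β/2 + b)) (k - (j:ℝ) + b) * (Real.Gamma (k + β/2 + 2*b) * Z) := by
            rw [show (j:ℝ) + β / 2 + b = (j:ℝ) + β/2 + b by norm_num, ← hBt1]; ring
    have part2 : m (k - (j:ℝ) + β / 2) * m (j:ℝ)
        ≤ Bt ((j:ℝ) + b) (k - (j:ℝ) + (β/2 + b)) * (Real.Gamma (k + β/2 + 2*b) * Z) := by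
      rw [hmz (k - (j:ℝ) + β / 2) (by linarith), hmz (j:ℝ) (by linarith)]
      calc z (k - (j:ℝ) + β / 2) * Real.Gamma (k - (j:ℝ) + β / 2 + b) *
            (z (j:ℝ) * Real.Gamma ((j:ℝ) + b))
          = (z (j:ℝ) * z (k - (j:ℝ) + β / 2)) *
              (Real.Gamma ((j:ℝ) + b) * Real.Gamma (k - (j:ℝ) + β / 2 + b)) := by ring
        _ ≤ Z * (Real.Gamma ((j:ℝ) + b) * Real.Gamma (k - (j:ℝ) + β / 2 + b)) :=
            mul_le_mul_of_nonneg_right hzZ2 (by positivity)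
        _ = Bt ((j:ℝ) + b) (k - (j:ℝ) + (β/2 + b)) * (Real.Gamma (k + β/2 + 2*b) * Z) := by
            rw [show k - (j:ℝ) + β / 2 + b = k - (j:ℝ) + β/2 + b by norm_num, ← hBt2]; ring
    calc m ((j:ℝ) + β / 2) * m (k - (j:ℝ)) + m (k - (j:ℝ) + β / 2) * m (j:ℝ)
        ≤ Bt ((j:ℝ) + (β/2 + b)) (k - (j:ℝ) + b) * (Real.Gamma (k + β/2 + 2*b) * Z)
          + Bt ((j:ℝ) + b) (k - (j:ℝ) + (β/2 + b)) * (Real.Gamma (k + β/2 + 2*b) * Z) :=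
          add_le_add part1 part2
      _ = (Bt ((j:ℝ) + (β/2 + b)) (k - (j:ℝ) + b) + Bt ((j:ℝ) + b) (k - (j:ℝ) + (β/2 + b))) *
            (Real.Gamma (k + β/2 + 2*b) * Z) := by ring
  have sum1 := main_sum ha hb hk
  have sum2 := main_sum hb ha hk
  calc (∑ j ∈ Finset.Icc 1 ⌊(k + 1) / 2⌋₊,
          (Real.Gamma (k + 1) / (Real.Gamma ((j:ℝ) + 1) * Real.Gamma (k - (j:ℝ) + 1))) *
            (m ((j:ℝ) + β / 2) * m (k - (j:ℝ)) + m (k - (j:ℝ) + β / 2) * m (j:ℝ)))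
      ≤ ∑ j ∈ Finset.Icc 1 ⌊(k + 1) / 2⌋₊,
          (Real.Gamma (k + 1) / (Real.Gamma ((j:ℝ) + 1) * Real.Gamma (k - (j:ℝ) + 1))) *
            ((Bt ((j:ℝ) + (β/2 + b)) (k - (j:ℝ) + b) + Bt ((j:ℝ) + b) (k - (j:ℝ) + (β/2 + b))) *
              (Real.Gamma (k + β/2 + 2*b) * Z)) := Finset.sum_le_sum termwise
    _ = ((∑ j ∈ Finset.Icc 1 ⌊(k + 1) / 2⌋₊,
            (Real.Gamma (k + 1) / (Real.Gamma ((j:ℝ) + 1) * Real.Gamma (k - (j:ℝ) + 1))) *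
              Bt ((j:ℝ) + (β/2 + b)) (k - (j:ℝ) + b))
          + (∑ j ∈ Finset.Icc 1 ⌊(k + 1) / 2⌋₊,
            (Real.Gamma (k + 1) / (Real.Gamma ((j:ℝ) + 1) * Real.Gamma (k - (j:ℝ) + 1))) *
              Bt ((j:ℝ) + b) (k - (j:ℝ) + (β/2 + b)))) * (Real.Gamma (k + β/2 + 2*b) * Z) := by
        rw [← Finset.sum_add_distrib, Finset.sum_mul]
        exact Finset.sum_congr rfl (fun j _ => by ring)
    _ ≤ (4 * Bt (β/2 + b) b + 4 * Bt b (β/2 + b)) * (Real.Gamma (k + β/2 + 2*b) * Z) := by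
        apply mul_le_mul_of_nonneg_right (add_le_add sum1 sum2)
        exact mul_nonneg hΓk.le hZ0
    _ = 8 * Bt (β/2 + b) b * Real.Gamma (k + β / 2 + 2 * b) * Z := by
        rw [Bt_symm b (β/2 + b)]; ring

end
end

section
/- Let f be absolutely continuous on [a,b], let [c,d] = f([a,b]), and let β be Lipschitz continuous on [c,d]. Let β' denote the a.e.-defined classical derivative of β, extended to all of [c,d] by assigning arbitrary finite values at points of nondifferentiability. Then β∘f is absolutely continuous on [a,b] and (β∘f)'(x) = β'(f(x)) · f'(x) for almost every x ∈ (a,b). -/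
open MeasureTheory Real Filter Set
open scoped Topology NNReal

noncomputable section

/-- f is absolutely continuous on [a,b] (ε–δ definition with finite disjoint
families of subintervals). -/
def AbsolutelyContinuousOnInterval' (f : ℝ → ℝ) (a b : ℝ) : Prop :=
  ∀ ε : ℝ, 0 < ε → ∃ δ : ℝ, 0 < δ ∧
    ∀ (n : ℕ) (I : Fin n → ℝ × ℝ),
      (∀ i, a ≤ (I i).1 ∧ (I i).1 ≤ (I i).2 ∧ (I i).2 ≤ b) →
      (Pairwise fun i j => Disjoint (Ioo (I i).1 (I i).2) (Ioo (I j).1 (I j).2)) →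
      (∑ i, ((I i).2 - (I i).1)) < δ →
      (∑ i, |f (I i).2 - f (I i).1|) < ε

/-- An absolutely continuous function on `[a,b]` is continuous on `[a,b]`. -/
lemma AbsolutelyContinuousOnInterval'.continuousOn {f : ℝ → ℝ} {a b : ℝ}
    (hf : AbsolutelyContinuousOnInterval' f a b) : ContinuousOn f (Icc a b) := by
  intro x hx
  rw [Metric.continuousWithinAt_iff]
  intro ε hε
  obtain ⟨δ, hδ, H⟩ := hf ε hε
  refine ⟨δ, hδ, fun {y} hy hyx => ?_⟩
  have key : |f (max x y) - f (min x y)| < ε := by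
    have h1 : ∀ i : Fin 1, a ≤ ((fun _ => (min x y, max x y)) i).1 ∧
        ((fun _ => (min x y, max x y)) i).1 ≤ ((fun _ => (min x y, max x y)) i).2 ∧
        ((fun _ => (min x y, max x y)) i).2 ≤ b := by
      intro i
      exact ⟨le_min hx.1 hy.1, min_le_max, max_le hx.2 hy.2⟩
    have h2 : Pairwise fun i j : Fin 1 =>
        Disjoint (Ioo ((fun _ => (min x y, max x y)) i).1 ((fun _ => (min x y, max x y)) i).2)
          (Ioo ((fun _ => (min x y, max x y)) j).1 ((fun _ => (min x y, max x y)) j).2) := by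
      intro i j hij; exact absurd (Subsingleton.elim i j) hij
    have h3 : (∑ i : Fin 1, (((fun _ => (min x y, max x y)) i).2 -
        ((fun _ => (min x y, max x y)) i).1)) < δ := by
      simp only [Fin.sum_univ_one]
      rw [Real.dist_eq] at hyx
      rcases abs_lt.1 hyx with ⟨hl, hr⟩
      rcases le_total x y with h | h
      · rw [max_eq_right h, min_eq_left h]; linarith
      · rw [max_eq_left h, min_eq_right h]; linarith
    have := H 1 (fun _ => (min x y, max x y)) h1 h2 h3
    simpa using this
  rw [Real.dist_eq]
  rcases le_total x y with h | h
  · rw [max_eq_right h, min_eq_left h] at key; exact key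
  · rw [max_eq_left h, min_eq_right h] at key; rwa [abs_sub_comm]

/-- If a function has everywhere on a measurable set `S` a derivative, is injective on `S`,
and maps `S` to a null set, then its derivative vanishes a.e. on `S`. -/
lemma deriv_zero_of_image_null {f f' : ℝ → ℝ} {S : Set ℝ} (hS : MeasurableSet S)
    (hd : ∀ x ∈ S, HasDerivAt f (f' x) x) (hinj : InjOn f S)
    (h0 : volume (f '' S) = 0) : volume ({x | f' x ≠ 0} ∩ S) = 0 := by
  set F : ℝ → ℝ →L[ℝ] ℝ := fun x => (1 : ℝ →L[ℝ] ℝ).smulRight (f' x) with hF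
  have hF' : ∀ x ∈ S, HasFDerivWithinAt f (F x) S x := fun x hx =>
    ((hd x hx).hasDerivWithinAt).hasFDerivWithinAt
  have hle : (∫⁻ x in S, ENNReal.ofReal |(F x).det| ∂volume) ≤ volume (f '' S) :=
    lintegral_abs_det_fderiv_le_addHaar_image volume hS hF' hinj
  have hmeas : AEMeasurable F (volume.restrict S) := aemeasurable_fderivWithin volume hS hF'
  have hmeas2 : AEMeasurable (fun x => ENNReal.ofReal |(F x).det|) (volume.restrict S) := by
    exact (ENNReal.continuous_ofReal.comp (continuous_abs.comp
      ContinuousLinearMap.continuous_det)).measurable.comp_aemeasurable hmeas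
  have hz : (∫⁻ x in S, ENNReal.ofReal |(F x).det| ∂volume) = 0 :=
    le_antisymm (h0 ▸ hle) (zero_le)
  have hae : ∀ᵐ x ∂(volume.restrict S), ENNReal.ofReal |(F x).det| = 0 := by
    have := (lintegral_eq_zero_iff' hmeas2).1 hz
    filter_upwards [this] with x hx using hx
  have hae2 : ∀ᵐ x ∂(volume.restrict S), f' x = 0 := by
    filter_upwards [hae] with x hx
    simp only [hF, ContinuousLinearMap.smulRight_one_eq_toSpanSingleton, ContinuousLinearMap.det_toSpanSingleton] at hx
    have : |f' x| ≤ 0 := by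
      by_contra h
      push_neg at h
      rw [ENNReal.ofReal_eq_zero] at hx
      linarith
    simpa using le_antisymm this (abs_nonneg _)
  have := ae_iff.1 hae2
  rwa [Measure.restrict_apply' hS] at this

/-- If `f` is continuous on `[a,b]`, has a derivative at every point of a measurable
set `G ⊆ (a,b)`, and `N` is a measurable null set, then at a.e. point of `G` whose image
lies in `N` the derivative of `f` vanishes. -/
lemma null_of_preimage_null {f f' g : ℝ → ℝ} {a b : ℝ}
    (hcont : ContinuousOn f (Icc a b)) (hg : Continuous g) (hgf : EqOn f g (Icc a b))
    {G : Set ℝ} (hG : MeasurableSet G) (hGsub : G ⊆ Ioo a b)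
    (hd : ∀ x ∈ G, HasDerivAt f (f' x) x)
    {N : Set ℝ} (hN : MeasurableSet N) (hN0 : volume N = 0) :
    volume {x ∈ G | f x ∈ N ∧ f' x ≠ 0} = 0 := by
  have hsub : G ⊆ Icc a b := fun x hx => Ioo_subset_Icc_self (hGsub hx)
  set c : ℕ → ℝ := fun m : ℕ => 1 / (2 * ((m:ℝ) + 1)) with hc
  set r : ℕ → ℝ := fun k : ℕ => 1 / ((k:ℝ) + 1) with hr
  set sg : Bool → ℝ := fun σ => if σ then 1 else -1 with hsg
  set D : Bool → ℕ → ℕ → Set ℝ := fun σ m k =>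
    ⋂ (q : ℚ), {x | x ∈ Icc a b ∧ ((q : ℝ) ∈ Icc a b → |(q : ℝ) - x| ≤ r k →
      ((q : ℝ) - x) ^ 2 * c m ≤ sg σ * ((f q - f x) * ((q : ℝ) - x)))} with hD
  have hcpos : ∀ m, 0 < c m := fun m => by rw [hc]; positivity
  have hrpos : ∀ k, 0 < r k := fun k => by rw [hr]; positivity
  have hDmeas : ∀ σ m k, MeasurableSet (D σ m k) := by
    intro σ m k
    rw [hD]
    apply MeasurableSet.iInter
    intro q
    by_cases hq : (q : ℝ) ∈ Icc a b
    · have : {x | x ∈ Icc a b ∧ ((q : ℝ) ∈ Icc a b → |(q : ℝ) - x| ≤ r k →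
          ((q : ℝ) - x) ^ 2 * c m ≤ sg σ * ((f q - f x) * ((q : ℝ) - x)))} =
          (Icc a b ∩ {x | r k < |(q : ℝ) - x|}) ∪
          (Icc a b ∩ (fun x => sg σ * ((f q - f x) * ((q : ℝ) - x)) -
            ((q : ℝ) - x) ^ 2 * c m) ⁻¹' (Ici 0)) := by
        ext x
        simp only [mem_setOf_eq, mem_union, mem_inter_iff, mem_preimage, mem_Ici]
        constructor
        · rintro ⟨hx, h⟩
          rcases le_or_gt (|(q : ℝ) - x|) (r k) with h' | h'
          · exact Or.inr ⟨hx, by linarith [h hq h']⟩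
          · exact Or.inl ⟨hx, h'⟩
        · rintro (⟨hx, h⟩ | ⟨hx, h⟩)
          · exact ⟨hx, fun _ h' => absurd h' (not_le.2 h)⟩
          · exact ⟨hx, fun _ _ => by linarith⟩
      rw [this]
      apply MeasurableSet.union
      · exact measurableSet_Icc.inter (isOpen_lt continuous_const
          (continuous_const.sub continuous_id).abs).measurableSet
      · have hcont' : ContinuousOn (fun x => sg σ * ((f q - f x) * ((q : ℝ) - x)) -
            ((q : ℝ) - x) ^ 2 * c m) (Icc a b) := by
          apply ContinuousOn.sub
          · exact continuousOn_const.mul ((continuousOn_const.sub hcont).mul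
              (continuousOn_const.sub continuousOn_id))
          · exact (((continuousOn_const.sub continuousOn_id).pow 2).mul continuousOn_const)
        exact (hcont'.preimage_isClosed_of_isClosed isClosed_Icc isClosed_Ici).measurableSet
    · have : {x | x ∈ Icc a b ∧ ((q : ℝ) ∈ Icc a b → |(q : ℝ) - x| ≤ r k →
          ((q : ℝ) - x) ^ 2 * c m ≤ sg σ * ((f q - f x) * ((q : ℝ) - x)))} = Icc a b := by
        ext x; simp only [mem_setOf_eq]; exact ⟨fun h => h.1, fun h => ⟨h, fun h' => absurd h' hq⟩⟩
      rw [this]; exact measurableSet_Icc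
  have hmono : ∀ σ m k, ∀ x ∈ D σ m k, ∀ x' ∈ D σ m k, x < x' → x' - x ≤ r k →
      0 < sg σ * (f x' - f x) := by
    intro σ m k x hx x' hx' hlt hle
    rw [hD] at hx hx'
    simp only [mem_iInter, mem_setOf_eq] at hx hx'
    have hxI : x ∈ Icc a b := (hx 0).1
    have hx'I : x' ∈ Icc a b := (hx' 0).1
    have seq : ∀ n : ℕ, ∃ q : ℚ, x < (q:ℝ) ∧ (q:ℝ) < x' ∧ x' - 1/(n+1) < (q:ℝ) := by
      intro n
      have h1 : max x (x' - 1/(n+1)) < x' := by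
        apply max_lt hlt
        have : (0:ℝ) < 1/(n+1) := by positivity
        linarith
      rcases exists_rat_btwn h1 with ⟨q, hq1, hq2⟩
      exact ⟨q, (le_max_left _ _).trans_lt hq1, hq2, (le_max_right _ _).trans_lt hq1⟩
    choose q hq1 hq2 hq3 using seq
    have hqmem : ∀ n, (q n : ℝ) ∈ Icc a b :=
      fun n => ⟨hxI.1.trans (hq1 n).le, (hq2 n).le.trans hx'I.2⟩
    have hqt : Tendsto (fun n => (q n : ℝ)) atTop (𝓝 x') := by
      have h0 : Tendsto (fun n : ℕ => x' - 1/(n+1:ℝ)) atTop (𝓝 x') := by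
        have := tendsto_one_div_add_atTop_nhds_zero_nat (𝕜 := ℝ)
        simpa using tendsto_const_nhds.sub this
      exact tendsto_of_tendsto_of_tendsto_of_le_of_le h0 tendsto_const_nhds
        (fun n => (hq3 n).le) (fun n => (hq2 n).le)
    have hfq : Tendsto (fun n => f (q n)) atTop (𝓝 (f x')) := by
      apply (hcont x' hx'I).tendsto.comp
      rw [tendsto_nhdsWithin_iff]
      exact ⟨hqt, Eventually.of_forall hqmem⟩
    have key : ∀ n, ((q n : ℝ) - x) ^ 2 * c m ≤ sg σ * ((f (q n) - f x) * ((q n : ℝ) - x)) := by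
      intro n
      apply (hx (q n)).2 (hqmem n)
      rw [abs_of_pos (by linarith [hq1 n])]
      linarith [hq2 n]
    have hE : (x' - x) ^ 2 * c m ≤ sg σ * ((f x' - f x) * (x' - x)) := by
      have T1 : Tendsto (fun n => ((q n : ℝ) - x) ^ 2 * c m) atTop (𝓝 ((x' - x) ^ 2 * c m)) :=
        ((hqt.sub tendsto_const_nhds).pow 2).mul tendsto_const_nhds
      have T2 : Tendsto (fun n => sg σ * ((f (q n) - f x) * ((q n : ℝ) - x))) atTop
          (𝓝 (sg σ * ((f x' - f x) * (x' - x)))) :=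
        tendsto_const_nhds.mul ((hfq.sub tendsto_const_nhds).mul (hqt.sub tendsto_const_nhds))
      exact le_of_tendsto_of_tendsto' T1 T2 key
    have h2 : 0 < (x' - x) ^ 2 * c m := by
      have h3 : (0:ℝ) < x' - x := by linarith
      have := hcpos m
      positivity
    nlinarith [hE, h2, sub_pos.2 hlt]
  have hcover : ∀ x ∈ Icc a b, HasDerivAt f (f' x) x → f' x ≠ 0 →
      ∃ σ, ∃ m, ∃ k, ∃ j : ℤ, x ∈ D σ m k ∧ x ∈ Icc ((j:ℝ) * r k) (((j:ℝ)+1) * r k) := by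
    intro x hxI hdx hne
    have habs : 0 < |f' x| := abs_pos.2 hne
    obtain ⟨m, hm⟩ := exists_nat_one_div_lt habs
    set σ : Bool := decide (0 < f' x) with hσ
    have hsgf : sg σ * f' x = |f' x| := by
      rcases lt_or_gt_of_ne hne with h | h
      · rw [abs_of_neg h]; simp [hσ, hsg, h.not_gt]
      · rw [abs_of_pos h]; simp [hσ, hsg, h]
    have hcm : 0 < c m := hcpos m
    have h2cm : 2 * c m < |f' x| := by
      rw [hc]
      calc 2 * (1 / (2 * ((m:ℝ) + 1))) = 1 / ((m:ℝ)+1) := by field_simp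
      _ < |f' x| := hm
    have hlo : ∀ᶠ y in 𝓝 x, ‖f y - f x - (y - x) • f' x‖ ≤ c m * ‖y - x‖ :=
      Asymptotics.IsLittleO.bound (hasDerivAt_iff_isLittleO.1 hdx) hcm
    rw [Metric.eventually_nhds_iff] at hlo
    obtain ⟨δ, hδpos, hδ⟩ := hlo
    obtain ⟨k, hk⟩ := exists_nat_one_div_lt hδpos
    have hrk : r k < δ := by rw [hr]; exact hk
    have hrkpos : 0 < r k := hrpos k
    have hmain : ∀ y : ℝ, |y - x| ≤ r k →
        (y - x) ^ 2 * c m ≤ sg σ * ((f y - f x) * (y - x)) := by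
      intro y hy
      have hb : |f y - f x - (y - x) * f' x| ≤ c m * |y - x| := by
        have := hδ (y := y) (by rw [Real.dist_eq]; exact lt_of_le_of_lt hy hrk)
        simpa [Real.norm_eq_abs, smul_eq_mul] using this
      have hsgabs : |sg σ| = 1 := by rcases Bool.dichotomy σ with h | h <;> simp [hsg, h]
      set u := y - x
      set w := f y - f x - u * f' x with hw
      have hfy : f y - f x = w + u * f' x := by rw [hw]; ring
      have e1 : sg σ * ((f y - f x) * u) = sg σ * w * u + |f' x| * u ^ 2 := by
        rw [hfy]; rw [← hsgf]; ring
      have e2 : -(c m * u^2) ≤ sg σ * w * u := by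
        have h3 : |sg σ * w * u| ≤ c m * u ^ 2 := by
          rw [abs_mul, abs_mul, hsgabs, one_mul]
          calc |w| * |u| ≤ (c m * |u|) * |u| :=
                mul_le_mul_of_nonneg_right hb (abs_nonneg _)
          _ = c m * u ^ 2 := by rw [mul_assoc, ← sq_abs]; ring
        linarith [neg_abs_le (sg σ * w * u)]
      rw [e1]
      nlinarith [sq_nonneg u]
    refine ⟨σ, m, k, ⌊x / r k⌋, ?_, ?_, ?_⟩
    · rw [hD]
      exact mem_iInter.2 fun q => ⟨hxI, fun _ hq => hmain q hq⟩
    · calc (⌊x / r k⌋ : ℝ) * r k ≤ (x / r k) * r k :=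
            mul_le_mul_of_nonneg_right (Int.floor_le _) hrkpos.le
      _ = x := div_mul_cancel₀ x hrkpos.ne'
    · have h4 : x / r k < (⌊x / r k⌋ : ℝ) + 1 := Int.lt_floor_add_one _
      have h5 : x / r k * r k < ((⌊x / r k⌋ : ℝ) + 1) * r k :=
        mul_lt_mul_of_pos_right h4 hrkpos
      rw [div_mul_cancel₀ x hrkpos.ne'] at h5
      exact h5.le
  set S : Bool × ℕ × ℕ × ℤ → Set ℝ := fun p =>
    D p.1 p.2.1 p.2.2.1 ∩ Icc ((p.2.2.2 : ℝ) * r p.2.2.1) (((p.2.2.2 : ℝ)+1) * r p.2.2.1) ∩ G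
      ∩ g ⁻¹' N with hS
  have hSnull : ∀ p, volume ({x | f' x ≠ 0} ∩ S p) = 0 := by
    rintro ⟨σ, m, k, j⟩
    apply deriv_zero_of_image_null (f := f)
    · exact (((hDmeas σ m k).inter measurableSet_Icc).inter hG).inter (hN.preimage hg.measurable)
    · exact fun x hx => hd x hx.1.2
    · intro x hx y hy hfxy
      by_contra hne
      have hlen : ∀ z z', z ∈ S (σ, m, k, j) → z' ∈ S (σ, m, k, j) → z' - z ≤ r k := by
        intro z z' hz hz'
        have h1 := hz.1.1.2
        have h2 := hz'.1.1.2
        simp only [mem_Icc] at h1 h2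
        nlinarith [h1.1, h2.2]
      rcases lt_or_gt_of_ne hne with h | h
      · have := hmono σ m k x hx.1.1.1 y hy.1.1.1 h (hlen x y hx hy)
        rw [hfxy] at this
        simp at this
      · have := hmono σ m k y hy.1.1.1 x hx.1.1.1 h (hlen y x hy hx)
        rw [hfxy] at this
        simp at this
    · apply measure_mono_null _ hN0
      rintro _ ⟨x, hx, rfl⟩
      have hxG : x ∈ G := hx.1.2
      have : f x = g x := hgf (hsub hxG)
      rw [this]
      exact hx.2
  have hTsub : {x ∈ G | f x ∈ N ∧ f' x ≠ 0} ⊆ ⋃ p, ({x | f' x ≠ 0} ∩ S p) := by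
    rintro x ⟨hxG, hxN, hxne⟩
    obtain ⟨σ, m, k, j, hxD, hxJ⟩ := hcover x (hsub hxG) (hd x hxG) hxne
    refine mem_iUnion.2 ⟨(σ, m, k, j), hxne, ⟨⟨hxD, hxJ⟩, hxG⟩, ?_⟩
    have : f x = g x := hgf (hsub hxG)
    simpa [mem_preimage, ← this] using hxN
  exact measure_mono_null hTsub (measure_iUnion_null hSnull)

/-- **Chain rule for a Lipschitz function composed with an absolutely continuous
function** (Proposition A.1). If f ∈ AC[a,b], [c,d] = f([a,b]), β is Lipschitz on
[c,d], β' is the a.e.-defined classical derivative of β (with arbitrary finite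
values at points of nondifferentiability) and f' is the a.e. derivative of f,
then β∘f ∈ AC[a,b] and (β∘f)'(x) = β'(f(x)) f'(x) for a.e. x ∈ (a,b). -/
theorem lipschitz_comp_absolutelyContinuous_chain_rule
    (a b c d : ℝ) (hab : a ≤ b)
    (f : ℝ → ℝ) (hf : AbsolutelyContinuousOnInterval' f a b)
    (hcd : f '' (Icc a b) = Icc c d)
    (β : ℝ → ℝ) (K : ℝ≥0) (hβ : LipschitzOnWith K β (Icc c d))
    (β' : ℝ → ℝ)
    (hβ' : ∀ y ∈ Icc c d,
      HasDerivWithinAt β (β' y) (Icc c d) y ∨ ¬ DifferentiableWithinAt ℝ β (Icc c d) y)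
    (f' : ℝ → ℝ)
    (hf' : ∀ᵐ x ∂(volume.restrict (Ioo a b)), HasDerivAt f (f' x) x) :
    AbsolutelyContinuousOnInterval' (β ∘ f) a b ∧
    ∀ᵐ x ∂(volume.restrict (Ioo a b)),
      HasDerivAt (fun y => β (f y)) (β' (f x) * f' x) x := by
  have hmaps : MapsTo f (Icc a b) (Icc c d) := by
    rw [← hcd]; exact mapsTo_image _ _
  constructor
  · -- absolute continuity of the composition
    intro ε hε
    obtain ⟨δ, hδ, H⟩ := hf (ε / ((K:ℝ) + 1)) (by positivity)
    refine ⟨δ, hδ, fun n I h1 h2 h3 => ?_⟩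
    have hsum := H n I h1 h2 h3
    have hterm : ∀ i, |(β ∘ f) (I i).2 - (β ∘ f) (I i).1| ≤
        (K:ℝ) * |f (I i).2 - f (I i).1| := by
      intro i
      have m1 : f (I i).1 ∈ Icc c d := hmaps ⟨(h1 i).1, (h1 i).2.1.trans (h1 i).2.2⟩
      have m2 : f (I i).2 ∈ Icc c d := hmaps ⟨(h1 i).1.trans (h1 i).2.1, (h1 i).2.2⟩
      have := lipschitzOnWith_iff_dist_le_mul.1 hβ _ m2 _ m1
      simpa [Real.dist_eq, Function.comp] using this
    calc (∑ i, |(β ∘ f) (I i).2 - (β ∘ f) (I i).1|)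
        ≤ ∑ i, (K:ℝ) * |f (I i).2 - f (I i).1| := Finset.sum_le_sum fun i _ => hterm i
      _ = (K:ℝ) * ∑ i, |f (I i).2 - f (I i).1| := by rw [Finset.mul_sum]
      _ ≤ ((K:ℝ)+1) * ∑ i, |f (I i).2 - f (I i).1| := by
          apply mul_le_mul_of_nonneg_right (by linarith)
            (Finset.sum_nonneg fun i _ => abs_nonneg _)
      _ < ((K:ℝ)+1) * (ε / ((K:ℝ)+1)) := by
          apply mul_lt_mul_of_pos_left hsum (by positivity)
      _ = ε := by field_simp
  · -- the chain rule a.e.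
    have hcont : ContinuousOn f (Icc a b) := hf.continuousOn
    obtain ⟨B, hB, hBeq⟩ := hβ.extend_real
    have hNnull : volume {y | ¬ DifferentiableAt ℝ B y} = 0 := by
      have := hB.ae_differentiableAt_real
      exact ae_iff.1 this
    set N := toMeasurable volume {y | ¬ DifferentiableAt ℝ B y} with hN
    have hNmeas : MeasurableSet N := measurableSet_toMeasurable volume _
    have hN0 : volume N = 0 := by rw [hN, measure_toMeasurable]; exact hNnull
    set g : ℝ → ℝ := fun x => f (min b (max a x)) with hg
    have hgc : Continuous g := by
      apply hcont.comp_continuous (continuous_const.min (continuous_const.max continuous_id))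
      intro x
      exact ⟨le_min hab (le_max_left _ _), min_le_left _ _⟩
    have hgf : EqOn f g (Icc a b) := by
      intro x hx
      rw [hg]
      simp only [max_eq_right hx.1, min_eq_right hx.2]
    have hbad : volume ({x | ¬ HasDerivAt f (f' x) x} ∩ Ioo a b) = 0 := by
      have := ae_iff.1 hf'
      rwa [Measure.restrict_apply' measurableSet_Ioo] at this
    set T := toMeasurable volume ({x | ¬ HasDerivAt f (f' x) x} ∩ Ioo a b) with hT
    have hT0 : volume T = 0 := by rw [hT, measure_toMeasurable]; exact hbad
    set G : Set ℝ := Ioo a b \ T with hG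
    have hGmeas : MeasurableSet G := measurableSet_Ioo.diff (measurableSet_toMeasurable _ _)
    have hGsub : G ⊆ Ioo a b := diff_subset
    have hdG : ∀ x ∈ G, HasDerivAt f (f' x) x := by
      intro x hx
      by_contra h
      exact hx.2 (subset_toMeasurable _ _ ⟨h, hx.1⟩)
    have hZ : volume {x ∈ G | f x ∈ N ∧ f' x ≠ 0} = 0 :=
      null_of_preimage_null hcont hgc hgf hGmeas hGsub hdG hNmeas hN0
    have h1 : ∀ᵐ x ∂(volume.restrict (Ioo a b)), x ∈ Ioo a b :=
      ae_restrict_mem measurableSet_Ioo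
    have h2 : ∀ᵐ x ∂(volume.restrict (Ioo a b)), x ∉ T := by
      rw [ae_iff]
      simp only [not_not]
      rw [Measure.restrict_apply' measurableSet_Ioo]
      exact measure_mono_null inter_subset_left hT0
    have h3 : ∀ᵐ x ∂(volume.restrict (Ioo a b)), x ∉ {x ∈ G | f x ∈ N ∧ f' x ≠ 0} := by
      rw [ae_iff]
      simp only [not_not]
      rw [Measure.restrict_apply' measurableSet_Ioo]
      exact measure_mono_null inter_subset_left hZ
    filter_upwards [h1, h2, h3] with x hx1 hx2 hx3
    have hxG : x ∈ G := ⟨hx1, hx2⟩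
    have hdx : HasDerivAt f (f' x) x := hdG x hxG
    have hyI : f x ∈ Icc c d := hmaps (Ioo_subset_Icc_self hx1)
    by_cases hcase : f x ∈ N
    · -- derivative of f is zero here
      have hf0 : f' x = 0 := by
        by_contra h
        exact hx3 ⟨hxG, hcase, h⟩
      rw [hf0, mul_zero]
      rw [hasDerivAt_iff_isLittleO]
      have hfo : (fun y => f y - f x) =o[𝓝 x] (fun y => y - x) := by
        have := hasDerivAt_iff_isLittleO.1 (hf0 ▸ hdx)
        simpa using this
      have hbig : (fun y => β (f y) - β (f x)) =O[𝓝 x] (fun y => f y - f x) := by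
        apply Asymptotics.IsBigO.of_bound (K:ℝ)
        filter_upwards [Icc_mem_nhds hx1.1 hx1.2] with y hy
        have := lipschitzOnWith_iff_dist_le_mul.1 hβ _ (hmaps hy) _ hyI
        simpa [Real.norm_eq_abs, Real.dist_eq] using this
      simpa using hbig.trans_isLittleO hfo
    · -- β is differentiable at f x
      have hdiffB : DifferentiableAt ℝ B (f x) := by
        by_contra h
        exact hcase (subset_toMeasurable _ _ h)
      have hdiffβ : DifferentiableWithinAt ℝ β (Icc c d) (f x) :=
        (hdiffB.differentiableWithinAt).congr (fun y hy => hBeq hy) (hBeq hyI)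
      have hderivβ : HasDerivWithinAt β (β' (f x)) (Icc c d) (f x) := by
        rcases hβ' (f x) hyI with h | h
        · exact h
        · exact absurd hdiffβ h
      have comp := HasDerivWithinAt.comp x hderivβ (hdx.hasDerivWithinAt (s := Icc a b)) hmaps
      have hmem : Icc a b ∈ 𝓝 x := Icc_mem_nhds hx1.1 hx1.2
      have := comp.hasDerivAt hmem
      exact this

end
end

section
/- Let f be absolutely continuous on [a,b] and let N ⊂ ℝ be a set of Lebesgue measure zero. Then f'(x) = 0 for almost every x ∈ f⁻¹(N). In particular, if β is Lipschitz on f([a,b]) and A = {y ∈ [a,b] : β is not differentiable at f(y)}, then f' = 0 a.e. on A. -/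
open MeasureTheory Real Filter Set
open scoped Topology NNReal

noncomputable section

/-- f is absolutely continuous on [a,b] (ε–δ definition with finite disjoint
families of subintervals). -/
def AbsolutelyContinuousOnIntervalEps (f : ℝ → ℝ) (a b : ℝ) : Prop :=
  ∀ ε : ℝ, 0 < ε → ∃ δ : ℝ, 0 < δ ∧
    ∀ (n : ℕ) (I : Fin n → ℝ × ℝ),
      (∀ i, a ≤ (I i).1 ∧ (I i).1 ≤ (I i).2 ∧ (I i).2 ≤ b) →
      (Pairwise fun i j => Disjoint (Ioo (I i).1 (I i).2) (Ioo (I j).1 (I j).2)) →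
      (∑ i, ((I i).2 - (I i).1)) < δ →
      (∑ i, |f (I i).2 - f (I i).1|) < ε

/-- A Lipschitz image of a null set is null (via 1-dimensional Hausdorff measure). -/
lemma lip_image_null {K : ℝ≥0} {g : ℝ → ℝ} {s : Set ℝ}
    (h : LipschitzOnWith K g s) (hs : volume s = 0) : volume (g '' s) = 0 := by
  have h1 := h.hausdorffMeasure_image_le (zero_le_one (α := ℝ))
  rw [hausdorffMeasure_real] at h1
  simpa [hs] using h1

/-- If `f` expands distances on `T` (by factor `1/C` from below) and `f '' T` is null,
then `T` is null. -/
lemma expand_null {T : Set ℝ} {f : ℝ → ℝ} {C : ℝ≥0}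
    (hexp : ∀ x ∈ T, ∀ y ∈ T, |x - y| ≤ C * |f x - f y|)
    (hT : volume (f '' T) = 0) : volume T = 0 := by
  classical
  rcases T.eq_empty_or_nonempty with hne | ⟨x₀, hx₀⟩
  · simp [hne]
  set g : ℝ → ℝ := fun y => if h : ∃ x, x ∈ T ∧ f x = y then h.choose else x₀ with hg
  have hgmem : ∀ y ∈ f '' T, g y ∈ T ∧ f (g y) = y := by
    intro y hy
    have h : ∃ x, x ∈ T ∧ f x = y := by
      obtain ⟨x, hx, hfx⟩ := hy; exact ⟨x, hx, hfx⟩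
    simp only [hg, dif_pos h]
    exact h.choose_spec
  have hlip : LipschitzOnWith C g (f '' T) := by
    rw [lipschitzOnWith_iff_dist_le_mul]
    intro y hy z hz
    obtain ⟨h1, h2⟩ := hgmem y hy
    obtain ⟨h3, h4⟩ := hgmem z hz
    have h5 := hexp _ h1 _ h3
    rw [h2, h4] at h5
    simpa [Real.dist_eq] using h5
  have hsub : T ⊆ g '' (f '' T) := by
    intro x hx
    refine ⟨f x, ⟨x, hx, rfl⟩, ?_⟩
    obtain ⟨h1, h2⟩ := hgmem (f x) ⟨x, hx, rfl⟩
    have h3 := hexp _ h1 _ hx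
    rw [h2] at h3
    simpa [sub_eq_zero] using h3
  exact measure_mono_null hsub (lip_image_null hlip hT)

lemma key_null (f f' : ℝ → ℝ) {N : Set ℝ} (hN : volume N = 0) :
    volume {x : ℝ | HasDerivAt f (f' x) x ∧ f' x ≠ 0 ∧ f x ∈ N} = 0 := by
  set D := {x : ℝ | HasDerivAt f (f' x) x ∧ f' x ≠ 0 ∧ f x ∈ N} with hD
  have hcover : D ⊆ ⋃ (n : ℕ) (k : ℤ),
      ({x | x ∈ D ∧ ∀ y : ℝ, |y - x| < 1/(n+1) → |y - x| ≤ (n+1) * |f y - f x|} ∩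
        Ico ((k : ℝ)/(2*(n+1))) ((k+1)/(2*(n+1)))) := by
    intro x hx
    obtain ⟨hder, hne, hmemN⟩ := hx
    set c := f' x with hc
    have hcpos : 0 < |c| := abs_pos.2 hne
    -- slope estimate near x
    have hs := hasDerivAt_iff_tendsto_slope.1 hder
    rw [Metric.tendsto_nhdsWithin_nhds] at hs
    obtain ⟨δ, hδpos, hδ⟩ := hs (|c|/2) (by positivity)
    obtain ⟨n, hn⟩ := exists_nat_gt (max (1/δ) (2/|c|))
    have hn1 : (0:ℝ) < n + 1 := by positivity
    have hnδ : 1/δ < n + 1 := lt_trans (lt_of_le_of_lt (le_max_left _ _) hn) (by linarith)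
    have hnc : 2/|c| < n + 1 := lt_trans (lt_of_le_of_lt (le_max_right _ _) hn) (by linarith)
    have hprop : ∀ y : ℝ, |y - x| < 1/(n+1) → |y - x| ≤ (n+1) * |f y - f x| := by
      intro y hy
      rcases eq_or_ne y x with rfl | hyx
      · simp
      have hyδ : dist y x < δ := by
        rw [Real.dist_eq]
        calc |y - x| < 1/(n+1) := hy
        _ < δ := by
          rw [div_lt_iff₀ hn1]
          rw [div_lt_iff₀ hδpos] at hnδ
          nlinarith
      have hslope := hδ (mem_compl_singleton_iff.2 hyx) hyδ
      -- |slope f x y - c| < |c|/2  ⇒  |slope| ≥ |c|/2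
      rw [Real.dist_eq] at hslope
      have hsl : |c|/2 ≤ |slope f x y| := by
        have h1 := abs_sub_abs_le_abs_sub c (slope f x y)
        rw [abs_sub_comm] at h1
        linarith
      have hslval : slope f x y = (f y - f x) / (y - x) := by
        rw [slope_def_field]
      rw [hslval, abs_div] at hsl
      have hyx0 : 0 < |y - x| := abs_pos.2 (sub_ne_zero.2 hyx)
      rw [le_div_iff₀ hyx0] at hsl
      -- |c|/2 * |y-x| ≤ |f y - f x|; and 1/(n+1) ≤ |c|/2 ... rather (n+1) ≥ 2/|c|
      have h4 : |y - x| ≤ (n+1) * (|c|/2 * |y - x|) := by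
        rw [div_lt_iff₀ hcpos] at hnc
        nlinarith [abs_nonneg (y - x)]
      calc |y - x| ≤ (n+1) * (|c|/2 * |y - x|) := h4
        _ ≤ (n+1) * |f y - f x| := by
            apply mul_le_mul_of_nonneg_left hsl (by positivity)
    -- choose k
    set m : ℝ := 2*((n:ℝ)+1) with hm
    have hmpos : (0:ℝ) < m := by positivity
    refine mem_iUnion.2 ⟨n, mem_iUnion.2 ⟨⌊x * m⌋, ⟨⟨⟨hder, hne, hmemN⟩, hprop⟩, ?_, ?_⟩⟩⟩
    · rw [div_le_iff₀ hmpos]; exact Int.floor_le (x * m)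
    · rw [lt_div_iff₀ hmpos]; push_cast; linarith [Int.lt_floor_add_one (x * m)]
  refine measure_mono_null hcover (measure_iUnion_null fun n => measure_iUnion_null fun k => ?_)
  set P := ({x | x ∈ D ∧ ∀ y : ℝ, |y - x| < 1/(n+1) → |y - x| ≤ (n+1) * |f y - f x|} ∩
        Ico ((k : ℝ)/(2*(n+1))) ((k+1)/(2*(n+1)))) with hP
  have hn1 : (0:ℝ) < (n:ℝ) + 1 := by positivity
  refine expand_null (C := ⟨(n:ℝ)+1, by positivity⟩) (f := f) ?_ ?_
  · intro x hx y hy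
    rcases eq_or_ne y x with rfl | hyx
    · simp
    obtain ⟨⟨-, hxprop⟩, hx1, hx2⟩ := hx
    obtain ⟨⟨-, -⟩, hy1, hy2⟩ := hy
    have hBA : ((k:ℝ)+1)/(2*((n:ℝ)+1)) - (k:ℝ)/(2*((n:ℝ)+1)) = 1/(2*((n:ℝ)+1)) := by
      field_simp
      ring
    have hlen : (1:ℝ)/(2*((n:ℝ)+1)) < 1/((n:ℝ)+1) :=
      one_div_lt_one_div_of_lt hn1 (by linarith)
    have hdist : |y - x| < 1/((n:ℝ)+1) := by
      have h1 : (k:ℝ)/(2*((n:ℝ)+1)) ≤ x := hx1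
      have h2 : x < ((k:ℝ)+1)/(2*((n:ℝ)+1)) := hx2
      have h3 : (k:ℝ)/(2*((n:ℝ)+1)) ≤ y := hy1
      have h4 : y < ((k:ℝ)+1)/(2*((n:ℝ)+1)) := hy2
      rw [abs_sub_lt_iff]
      constructor <;> linarith
    have := hxprop y hdist
    rw [abs_sub_comm x y, abs_sub_comm (f x) (f y)]
    calc |y - x| ≤ ((n:ℝ)+1) * |f y - f x| := this
      _ = (⟨(n:ℝ)+1, by positivity⟩ : ℝ≥0) * |f y - f x| := rfl
  · refine measure_mono_null ?_ hN
    rintro z ⟨x, ⟨⟨hxD, -⟩, -⟩, rfl⟩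
    exact hxD.2.2

lemma part1 (a b : ℝ) (f f' : ℝ → ℝ)
    (hf' : ∀ᵐ x ∂(volume.restrict (Ioo a b)), HasDerivAt f (f' x) x)
    (N : Set ℝ) (hN : volume N = 0) :
    ∀ᵐ x ∂(volume.restrict ((Ioo a b) ∩ f ⁻¹' N)), f' x = 0 := by
  set s := Ioo a b ∩ f ⁻¹' N with hs
  have hW : volume {x | x ∈ Ioo a b ∧ ¬ HasDerivAt f (f' x) x} = 0 := by
    have h0 := ae_iff.1 hf'
    rw [Measure.restrict_apply' measurableSet_Ioo] at h0
    refine measure_mono_null ?_ h0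
    rintro x ⟨h1, h2⟩; exact ⟨h2, h1⟩
  have hDnull := key_null f f' hN
  set Z := toMeasurable volume ({x | x ∈ Ioo a b ∧ ¬ HasDerivAt f (f' x) x} ∪
    {x : ℝ | HasDerivAt f (f' x) x ∧ f' x ≠ 0 ∧ f x ∈ N}) with hZ
  have hZmeas : MeasurableSet Z := measurableSet_toMeasurable _ _
  have hZ0 : volume Z = 0 := by
    rw [hZ, measure_toMeasurable]; exact measure_union_null hW hDnull
  set M := (Ioo a b ∩ Zᶜ) ∩ deriv f ⁻¹' ({(0:ℝ)}ᶜ) with hM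
  have hMmeas : MeasurableSet M :=
    (measurableSet_Ioo.inter hZmeas.compl).inter
      ((measurable_deriv f) (measurableSet_singleton (0:ℝ)).compl)
  set B := Z ∪ M ∪ (Ioo a b)ᶜ with hB
  have hBmeas : MeasurableSet B := (hZmeas.union hMmeas).union measurableSet_Ioo.compl
  rw [ae_iff]
  have hsubB : {x | ¬ f' x = 0} ⊆ B := by
    intro x hx
    by_cases hxI : x ∈ Ioo a b
    · by_cases hxZ : x ∈ Z
      · exact Or.inl (Or.inl hxZ)
      · refine Or.inl (Or.inr ⟨⟨hxI, hxZ⟩, ?_⟩)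
        have hder : HasDerivAt f (f' x) x := by
          by_contra h
          exact hxZ (subset_toMeasurable _ _ (Or.inl ⟨hxI, h⟩))
        simp only [mem_preimage, mem_compl_iff, mem_singleton_iff]
        rw [hder.deriv]
        exact hx
    · exact Or.inr hxI
  have h1 : volume.restrict s {x | ¬ f' x = 0} ≤ volume (B ∩ s) := by
    rw [← Measure.restrict_apply hBmeas]
    exact measure_mono hsubB
  have hMs : M ∩ s = ∅ := by
    ext x
    simp only [mem_inter_iff, mem_empty_iff_false, iff_false, not_and]
    rintro ⟨⟨hx1, hx2⟩, hx3⟩ ⟨hx4, hx5⟩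
    have hder : HasDerivAt f (f' x) x := by
      by_contra h
      exact hx2 (subset_toMeasurable _ _ (Or.inl ⟨hx1, h⟩))
    have hne : f' x ≠ 0 := by
      have : deriv f x ≠ 0 := hx3
      rwa [hder.deriv] at this
    exact hx2 (subset_toMeasurable _ _ (Or.inr ⟨hder, hne, hx5⟩))
  have h2 : volume (B ∩ s) = 0 := by
    have hsub2 : B ∩ s ⊆ Z ∪ (M ∩ s) := by
      rintro x ⟨hxB, hxs⟩
      rcases hxB with (hxZ | hxM) | hxc
      · exact Or.inl hxZ
      · exact Or.inr ⟨hxM, hxs⟩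
      · exact absurd hxs.1 hxc
    refine measure_mono_null hsub2 (measure_union_null hZ0 ?_)
    rw [hMs]; simp
  exact le_antisymm (h1.trans h2.le) zero_le

/-- **Vanishing of the derivative on preimages of null sets** (the claim inside the
proof of Proposition A.1). If f is absolutely continuous on [a,b], f' is its a.e.
derivative and N is Lebesgue-null, then f' = 0 a.e. on f⁻¹(N). In particular, if β
is Lipschitz on f([a,b]) and A is the set of y ∈ [a,b] where β is not
differentiable (within f([a,b])) at f(y), then f' = 0 a.e. on A. -/
theorem deriv_zero_ae_on_preimage_of_null
    (a b : ℝ) (hab : a ≤ b)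
    (f : ℝ → ℝ) (hf : AbsolutelyContinuousOnIntervalEps f a b)
    (f' : ℝ → ℝ)
    (hf' : ∀ᵐ x ∂(volume.restrict (Ioo a b)), HasDerivAt f (f' x) x)
    (N : Set ℝ) (hN : volume N = 0) :
    (∀ᵐ x ∂(volume.restrict ((Ioo a b) ∩ f ⁻¹' N)), f' x = 0) ∧
    ∀ (β : ℝ → ℝ) (K : ℝ≥0), LipschitzOnWith K β (f '' (Icc a b)) →
      ∀ᵐ x ∂(volume.restrict ((Ioo a b) ∩
          {y : ℝ | ¬ DifferentiableWithinAt ℝ β (f '' (Icc a b)) (f y)})),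
        f' x = 0 := by
  refine ⟨part1 a b f f' hf' N hN, ?_⟩
  intro β K hβ
  obtain ⟨g, hg, hgeq⟩ := hβ.extend_real
  have hgdiff : ∀ᵐ z : ℝ, DifferentiableAt ℝ g z := hg.ae_differentiableAt_real
  have hN' : volume {z : ℝ | ¬ DifferentiableAt ℝ g z} = 0 := ae_iff.1 hgdiff
  have h1 := part1 a b f f' hf' _ hN'
  refine ae_restrict_of_ae_restrict_of_subset ?_ h1
  rintro y ⟨hy1, hy2⟩
  refine ⟨hy1, ?_⟩
  simp only [mem_preimage, mem_setOf_eq]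
  intro hd
  apply hy2
  exact (hd.differentiableWithinAt (s := f '' Icc a b)).congr
    (fun z hz => hgeq hz) (hgeq ⟨y, Ioo_subset_Icc_self hy1, rfl⟩)


end
end

section
/- Let d ≥ 2, α < d−1, and set ε = d−1−α > 0. Let h̄ : (−1,1) → [0,∞) be measurable with h̄(z) ≤ C (1−z²)^{−α/2} for all z ∈ (−1,1). For k ≥ 1 define a_k = ω_{d−2} ∫_{−1}^{1} ((1+z)/2)^k h̄(z) (1−z²)^{(d−3)/2} dz, where ω_{d−2} is the surface measure of the (d−2)-dimensional unit sphere. Then a_k ≤ C ω_{d−2} 2^{ε−1} B(k+ε/2, ε/2) for every k ≥ 1, where B is the Beta function; consequently there exists a constant C'' (depending on C, d, α) such that a_k ≤ C'' k^{−ε/2} for all k ≥ 1. -/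
open MeasureTheory Real Filter Set
open scoped Topology

noncomputable section

/-- The unit sphere S^{d-1} ⊆ ℝ^d. -/
def unitSphere (d : ℕ) : Set (Vel d) := {σ : Vel d | ‖σ‖ = 1}

/-- ω_{d−2}: the surface measure of the (d−2)-dimensional unit sphere,
i.e. the (d−2)-dimensional Hausdorff measure of S^{d−2} ⊆ ℝ^{d−1}. -/
def omegaSphere (d : ℕ) : ℝ := (μH[(d:ℝ)-2] (unitSphere (d-1))).toReal

/-! ### Auxiliary lemmas -/

lemma measurable_rpow_const' (c : ℝ) : Measurable (fun x : ℝ => x ^ c) := by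
  refine measurable_of_continuousOn_compl_singleton (0 : ℝ) ?_
  exact continuousOn_of_forall_continuousAt fun x hx =>
    Real.continuousAt_rpow_const x c (Or.inl hx)

lemma cpow_ofReal_eq' {x : ℝ} (y : ℝ) (hx : 0 ≤ x) : (x : ℂ) ^ ((y : ℂ)) = ((x ^ y : ℝ) : ℂ) :=
  (Complex.ofReal_cpow hx y).symm

lemma betaInt_measurable' (a b : ℝ) :
    Measurable (fun t : ℝ => t ^ (a - 1) * (1 - t) ^ (b - 1)) :=
  (measurable_rpow_const' (a-1)).mul
    ((measurable_rpow_const' (b-1)).comp (measurable_const.sub measurable_id))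

lemma betaInt_intervalIntegrable' {a b : ℝ} (ha : 0 < a) (hb : 0 < b) :
    IntervalIntegrable (fun t : ℝ => t ^ (a - 1) * (1 - t) ^ (b - 1)) volume 0 1 := by
  have hc : IntervalIntegrable (fun x : ℝ => (x : ℂ) ^ ((a : ℂ) - 1) * ((1:ℂ) - x) ^ ((b : ℂ) - 1))
      volume 0 1 := Complex.betaIntegral_convergent (by simpa using ha) (by simpa using hb)
  have heq : ∀ x ∈ Set.uIoc (0:ℝ) 1,
      (x : ℂ) ^ ((a : ℂ) - 1) * ((1:ℂ) - x) ^ ((b : ℂ) - 1)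
        = ((x ^ (a - 1) * (1 - x) ^ (b - 1) : ℝ) : ℂ) := by
    intro x hx
    rw [Set.uIoc_of_le zero_le_one] at hx
    rw [show ((a:ℂ) - 1) = ((a - 1 : ℝ) : ℂ) by push_cast; ring,
        show ((b:ℂ) - 1) = ((b - 1 : ℝ) : ℂ) by push_cast; ring,
        show ((1:ℂ) - (x:ℂ)) = ((1 - x : ℝ) : ℂ) by push_cast; ring,
        cpow_ofReal_eq' _ hx.1.le, cpow_ofReal_eq' _ (by linarith [hx.2] : (0:ℝ) ≤ 1 - x),
        ← Complex.ofReal_mul]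
  refine hc.mono_fun (betaInt_measurable' a b).aestronglyMeasurable ?_
  filter_upwards [ae_restrict_mem measurableSet_uIoc] with x hx
  rw [heq x hx]
  simp

lemma betaInt_integrableOn' {a b : ℝ} (ha : 0 < a) (hb : 0 < b) :
    IntegrableOn (fun t : ℝ => t ^ (a - 1) * (1 - t) ^ (b - 1)) (Ioo 0 1) :=
  (intervalIntegrable_iff_integrableOn_Ioo_of_le zero_le_one).mp
    (betaInt_intervalIntegrable' ha hb)

lemma betaInt_eq' {a b : ℝ} (ha : 0 < a) (hb : 0 < b) :
    ∫ t in Ioo (0:ℝ) 1, t ^ (a - 1) * (1 - t) ^ (b - 1)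
      = Real.Gamma a * Real.Gamma b / Real.Gamma (a + b) := by
  have hab : Real.Gamma (a + b) ≠ 0 := (Real.Gamma_pos_of_pos (by linarith)).ne'
  rw [eq_div_iff hab]
  have key := Complex.Gamma_mul_Gamma_eq_betaIntegral
    (by simpa using ha : 0 < Complex.re (a:ℂ)) (by simpa using hb : 0 < Complex.re (b:ℂ))
  have hβ : Complex.betaIntegral (a:ℂ) (b:ℂ)
      = ((∫ t in Ioo (0:ℝ) 1, t ^ (a - 1) * (1 - t) ^ (b - 1) : ℝ) : ℂ) := by
    rw [Complex.betaIntegral]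
    have : (∫ (x : ℝ) in (0:ℝ)..1, (x:ℂ) ^ ((a:ℂ) - 1) * ((1:ℂ) - x) ^ ((b:ℂ) - 1))
        = ∫ (x : ℝ) in (0:ℝ)..1, ((x ^ (a - 1) * (1 - x) ^ (b - 1) : ℝ) : ℂ) := by
      refine intervalIntegral.integral_congr fun x hx => ?_
      rw [Set.uIcc_of_le zero_le_one] at hx
      rw [show ((a:ℂ) - 1) = ((a - 1 : ℝ) : ℂ) by push_cast; ring,
          show ((b:ℂ) - 1) = ((b - 1 : ℝ) : ℂ) by push_cast; ring,
          show ((1:ℂ) - (x:ℂ)) = ((1 - x : ℝ) : ℂ) by push_cast; ring,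
          cpow_ofReal_eq' _ hx.1, cpow_ofReal_eq' _ (by linarith [hx.2] : (0:ℝ) ≤ 1 - x),
          ← Complex.ofReal_mul]
    rw [this, intervalIntegral.integral_ofReal]
    congr 1
    rw [intervalIntegral.integral_of_le zero_le_one, ← integral_Ioc_eq_integral_Ioo]
  rw [hβ, show ((a:ℂ)+(b:ℂ)) = ((a+b:ℝ):ℂ) by push_cast; ring] at key
  rw [Complex.Gamma_ofReal, Complex.Gamma_ofReal, Complex.Gamma_ofReal,
      ← Complex.ofReal_mul, ← Complex.ofReal_mul] at key
  have := Complex.ofReal_inj.mp key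
  linarith

lemma exp_integrableOn_Ioi' {s r : ℝ} (hs : 0 < s) (hr : 0 < r) :
    IntegrableOn (fun u : ℝ => u ^ (s - 1) * Real.exp (-(r * u))) (Ioi 0) := by
  have h0 : IntegrableOn (fun x : ℝ => Real.exp (-x) * x ^ (s - 1)) (Ioi 0) :=
    Real.GammaIntegral_convergent hs
  have h1 : IntegrableOn (fun x : ℝ => Real.exp (-(r * x)) * (r * x) ^ (s - 1)) (Ioi 0) := by
    have := (integrableOn_Ioi_comp_mul_left_iff
      (fun x : ℝ => Real.exp (-x) * x ^ (s - 1)) 0 hr).mpr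
    simpa using this (by simpa using h0)
  have h2 := h1.const_mul (r ^ (1 - s))
  refine IntegrableOn.congr_fun h2 (fun x hx => ?_) measurableSet_Ioi
  have hx0 : 0 < x := hx
  have hrr : r ^ (1 - s) * r ^ (s - 1) = 1 := by
    rw [← Real.rpow_add hr]; norm_num
  rw [Real.mul_rpow hr.le hx0.le]
  linear_combination (Real.exp (-(r * x)) * x ^ (s - 1)) * hrr

lemma betaInt_bound' {s : ℝ} (hs : 0 < s) :
    ∃ K : ℝ, 0 ≤ K ∧ ∀ k : ℝ, 1 ≤ k →
      ∫ t in Ioo (0:ℝ) 1, t ^ (k + s - 1) * (1 - t) ^ (s - 1) ≤ K * k ^ (-s) := by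
  refine ⟨2 ^ s * (Real.Gamma s + 1 / s), by positivity, fun k hk => ?_⟩
  have hk0 : (0:ℝ) < k := by linarith
  rcases le_or_gt k 2 with hk2 | hk2
  · have hle : ∫ t in Ioo (0:ℝ) 1, t ^ (k + s - 1) * (1 - t) ^ (s - 1)
        ≤ ∫ t in Ioo (0:ℝ) 1, t ^ ((1:ℝ) - 1) * (1 - t) ^ (s - 1) := by
      refine setIntegral_mono_on ?_ ?_ measurableSet_Ioo (fun t ht => ?_)
      · exact betaInt_integrableOn' (by linarith) hs
      · exact betaInt_integrableOn' one_pos hs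
      · rw [sub_self, Real.rpow_zero, one_mul]
        have h1 : t ^ (k + s - 1) ≤ 1 := Real.rpow_le_one ht.1.le ht.2.le (by linarith)
        calc t ^ (k + s - 1) * (1 - t) ^ (s - 1) ≤ 1 * (1 - t) ^ (s - 1) :=
              mul_le_mul_of_nonneg_right h1 (Real.rpow_nonneg (by linarith [ht.2]) _)
          _ = (1 - t) ^ (s - 1) := one_mul _
    have hval : ∫ t in Ioo (0:ℝ) 1, t ^ ((1:ℝ) - 1) * (1 - t) ^ (s - 1) = 1 / s := by
      rw [betaInt_eq' one_pos hs, Real.Gamma_one, add_comm,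
        Real.Gamma_add_one hs.ne']
      field_simp [(Real.Gamma_pos_of_pos hs).ne']
    have hksle : k ^ s ≤ 2 ^ s := Real.rpow_le_rpow hk0.le hk2 hs.le
    have hkinv : (1:ℝ) ≤ 2 ^ s * k ^ (-s) := by
      rw [Real.rpow_neg hk0.le]
      calc (1:ℝ) = k ^ s * (k ^ s)⁻¹ := by
            rw [mul_inv_cancel₀ (by positivity)]
        _ ≤ 2 ^ s * (k ^ s)⁻¹ := by gcongr
    calc ∫ t in Ioo (0:ℝ) 1, t ^ (k + s - 1) * (1 - t) ^ (s - 1) ≤ 1 / s := hle.trans_eq hval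
      _ = 1 * (1 / s) := (one_mul _).symm
      _ ≤ (2 ^ s * k ^ (-s)) * (Real.Gamma s + 1 / s) := by
          refine mul_le_mul hkinv ?_ (by positivity) (by positivity)
          have := (Real.Gamma_pos_of_pos hs).le
          linarith
      _ = 2 ^ s * (Real.Gamma s + 1/s) * k ^ (-s) := by ring
  · have hr : (0:ℝ) < k - 1 := by linarith
    set r := k - 1 with hrdef
    have hpt : ∀ t ∈ Ioo (0:ℝ) 1, t ^ (k + s - 1) * (1 - t) ^ (s - 1)
        ≤ (1 - t) ^ (s - 1) * Real.exp (-(r * (1 - t))) := by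
      intro t ht
      have ht0 : 0 < t := ht.1
      have ht1 : t < 1 := ht.2
      have h1 : t ^ (k + s - 1) ≤ t ^ (k - 1) := by
        apply Real.rpow_le_rpow_of_exponent_ge ht0 ht1.le
        linarith
      have h2 : t ^ (k - 1) ≤ Real.exp (-(r * (1 - t))) := by
        rw [Real.rpow_def_of_pos ht0]
        apply Real.exp_le_exp.mpr
        have hlog : Real.log t ≤ t - 1 := Real.log_le_sub_one_of_pos ht0
        nlinarith [hlog, hr.le]
      calc t ^ (k + s - 1) * (1 - t) ^ (s - 1)
          ≤ Real.exp (-(r * (1 - t))) * (1 - t) ^ (s - 1) := by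
            refine mul_le_mul (h1.trans h2) le_rfl ?_ (Real.exp_nonneg _)
            exact Real.rpow_nonneg (by linarith) _
        _ = (1 - t) ^ (s - 1) * Real.exp (-(r * (1 - t))) := by ring
    have hGint : IntegrableOn (fun u : ℝ => u ^ (s - 1) * Real.exp (-(r * u))) (Ioi (0:ℝ)) :=
      exp_integrableOn_Ioi' hs hr
    have hGooint : IntegrableOn (fun u : ℝ => u ^ (s - 1) * Real.exp (-(r * u))) (Ioo (0:ℝ) 1) :=
      hGint.mono_set Ioo_subset_Ioi_self
    have hgint : IntegrableOn (fun t : ℝ => (1 - t) ^ (s - 1) * Real.exp (-(r * (1 - t))))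
        (Ioo (0:ℝ) 1) := by
      have hI : IntervalIntegrable (fun u : ℝ => u ^ (s - 1) * Real.exp (-(r * u))) volume 0 1 :=
        (intervalIntegrable_iff_integrableOn_Ioo_of_le zero_le_one).mpr hGooint
      have h2 := (hI.comp_sub_left 1).symm
      simpa using (intervalIntegrable_iff_integrableOn_Ioo_of_le zero_le_one).mp (by simpa using h2)
    have step1 : ∫ t in Ioo (0:ℝ) 1, t ^ (k + s - 1) * (1 - t) ^ (s - 1)
        ≤ ∫ t in Ioo (0:ℝ) 1, (1 - t) ^ (s - 1) * Real.exp (-(r * (1 - t))) := by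
      refine setIntegral_mono_on (betaInt_integrableOn' (by linarith) hs) hgint
        measurableSet_Ioo hpt
    have step2 : ∫ t in Ioo (0:ℝ) 1, (1 - t) ^ (s - 1) * Real.exp (-(r * (1 - t)))
        = ∫ u in Ioo (0:ℝ) 1, u ^ (s - 1) * Real.exp (-(r * u)) := by
      rw [← integral_Ioc_eq_integral_Ioo, ← intervalIntegral.integral_of_le zero_le_one,
          ← integral_Ioc_eq_integral_Ioo, ← intervalIntegral.integral_of_le zero_le_one]
      have := intervalIntegral.integral_comp_sub_left
        (a := (0:ℝ)) (b := 1) (fun u : ℝ => u ^ (s - 1) * Real.exp (-(r * u))) 1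
      simpa using this
    have step3 : ∫ u in Ioo (0:ℝ) 1, u ^ (s - 1) * Real.exp (-(r * u))
        ≤ ∫ u in Ioi (0:ℝ), u ^ (s - 1) * Real.exp (-(r * u)) := by
      refine setIntegral_mono_set hGint ?_ (HasSubset.Subset.eventuallyLE Ioo_subset_Ioi_self)
      filter_upwards [ae_restrict_mem measurableSet_Ioi] with u hu
      have : (0:ℝ) < u := hu
      positivity
    have step4 : ∫ u in Ioi (0:ℝ), u ^ (s - 1) * Real.exp (-(r * u))
        = (1 / r) ^ s * Real.Gamma s := Real.integral_rpow_mul_exp_neg_mul_Ioi hs hr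
    have step5 : (1 / r) ^ s ≤ 2 ^ s * k ^ (-s) := by
      have h1 : (1:ℝ) / r ≤ 2 / k := by
        rw [div_le_div_iff₀ hr hk0]
        linarith
      calc (1/r) ^ s ≤ (2/k) ^ s := Real.rpow_le_rpow (by positivity) h1 hs.le
        _ = 2 ^ s * k ^ (-s) := by
            rw [Real.div_rpow (by norm_num) hk0.le, Real.rpow_neg hk0.le, div_eq_mul_inv]
    calc ∫ t in Ioo (0:ℝ) 1, t ^ (k + s - 1) * (1 - t) ^ (s - 1)
        ≤ (1 / r) ^ s * Real.Gamma s := by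
          rw [← step4]; exact (step1.trans_eq step2).trans step3
      _ ≤ (2 ^ s * k ^ (-s)) * Real.Gamma s := by
          refine mul_le_mul_of_nonneg_right step5 (Real.Gamma_pos_of_pos hs).le
      _ = (2 ^ s * k ^ (-s)) * Real.Gamma s := rfl
      _ ≤ (2 ^ s * k ^ (-s)) * (Real.Gamma s + 1 / s) := by
          exact mul_le_mul_of_nonneg_left (le_add_of_nonneg_right (by positivity)) (by positivity)
      _ = 2 ^ s * (Real.Gamma s + 1 / s) * k ^ (-s) := by ring

private def Faux (k s : ℝ) : ℝ → ℝ :=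
  fun t => t ^ k * (4 * (t * (1 - t))) ^ (s - 1)

lemma Faux_comp {k s : ℝ} (z : ℝ) :
    ((1 + z) / 2) ^ k * (1 - z ^ 2) ^ (s - 1) = Faux k s (2⁻¹ * z + 2⁻¹) := by
  unfold Faux
  have b1 : (1 + z) / 2 = 2⁻¹ * z + 2⁻¹ := by ring
  have b2 : 1 - z ^ 2 = 4 * ((2⁻¹ * z + 2⁻¹) * (1 - (2⁻¹ * z + 2⁻¹))) := by ring
  rw [b1, b2]

lemma Faux_eqOn {k s : ℝ} (hs : 0 < s) :
    EqOn (fun t : ℝ => 4 ^ (s - 1) * (t ^ (k + s - 1) * (1 - t) ^ (s - 1)))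
      (Faux k s) (Ioo 0 1) := by
  intro t ht
  have ht0 : (0:ℝ) < t := ht.1
  have ht1 : t < 1 := ht.2
  unfold Faux
  simp only
  rw [Real.mul_rpow (by norm_num) (by nlinarith : (0:ℝ) ≤ t * (1 - t)),
      Real.mul_rpow ht0.le (by linarith : (0:ℝ) ≤ 1 - t),
      show k + s - 1 = k + (s - 1) by ring, Real.rpow_add ht0]
  ring

lemma Faux_integrableOn {k s : ℝ} (hs : 0 < s) (hk : 0 ≤ k) :
    IntegrableOn (Faux k s) (Ioo (0:ℝ) 1) := by
  have h := (betaInt_integrableOn' (show 0 < k + s by linarith) hs).const_mul (4 ^ (s - 1) : ℝ)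
  exact IntegrableOn.congr_fun h (Faux_eqOn hs) measurableSet_Ioo

lemma subst_integrableOn {k s : ℝ} (hs : 0 < s) (hk : 0 ≤ k) :
    IntegrableOn (fun z : ℝ => ((1 + z) / 2) ^ k * (1 - z ^ 2) ^ (s - 1)) (Ioo (-1:ℝ) 1) := by
  have h1 : IntervalIntegrable (Faux k s) volume 0 1 :=
    (intervalIntegrable_iff_integrableOn_Ioo_of_le zero_le_one).mpr (Faux_integrableOn hs hk)
  have h2 := h1.comp_add_right 2⁻¹
  have h3 := h2.comp_mul_left (c := 2⁻¹)
  norm_num at h3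
  have h4 := (intervalIntegrable_iff_integrableOn_Ioo_of_le (by norm_num : (-1:ℝ) ≤ 1)).mp h3
  rw [show (fun z : ℝ => ((1 + z) / 2) ^ k * (1 - z ^ 2) ^ (s - 1))
      = (fun z : ℝ => Faux k s (2⁻¹ * z + 2⁻¹)) from funext fun z => Faux_comp z]
  simpa only [one_div] using h4

lemma subst_eq {k s : ℝ} (hs : 0 < s) :
    ∫ z in Ioo (-1:ℝ) 1, ((1 + z) / 2) ^ k * (1 - z ^ 2) ^ (s - 1)
      = 2 ^ (2 * s - 1) * ∫ t in Ioo (0:ℝ) 1, t ^ (k + s - 1) * (1 - t) ^ (s - 1) := by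
  have e1 : ∫ z in Ioo (-1:ℝ) 1, ((1 + z) / 2) ^ k * (1 - z ^ 2) ^ (s - 1)
      = ∫ z in (-1:ℝ)..1, Faux k s (2⁻¹ * z + 2⁻¹) := by
    rw [intervalIntegral.integral_of_le (by norm_num : (-1:ℝ) ≤ 1), integral_Ioc_eq_integral_Ioo]
    exact setIntegral_congr_fun measurableSet_Ioo fun z _ => Faux_comp z
  have e2 : ∫ z in (-1:ℝ)..1, Faux k s (2⁻¹ * z + 2⁻¹)
      = (2:ℝ) * ∫ t in (0:ℝ)..1, Faux k s t := by
    rw [intervalIntegral.integral_comp_mul_add (a := (-1:ℝ)) (b := 1) (Faux k s)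
      (by norm_num : (2⁻¹:ℝ) ≠ 0) 2⁻¹]
    norm_num
  have e3 : ∫ t in (0:ℝ)..1, Faux k s t
      = 4 ^ (s - 1) * ∫ t in Ioo (0:ℝ) 1, t ^ (k + s - 1) * (1 - t) ^ (s - 1) := by
    rw [intervalIntegral.integral_of_le zero_le_one, integral_Ioc_eq_integral_Ioo,
      ← integral_const_mul]
    exact setIntegral_congr_fun measurableSet_Ioo (Faux_eqOn hs) |>.symm
  have e4 : (2:ℝ) * 4 ^ (s - 1) = 2 ^ (2 * s - 1) := by
    have h4 : (4:ℝ) = 2 ^ (2:ℝ) := by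
      rw [show (2:ℝ) ^ (2:ℝ) = 2 ^ (2:ℕ) by rw [← Real.rpow_natCast]; norm_num]
      norm_num
    rw [h4, ← Real.rpow_mul (by norm_num : (0:ℝ) ≤ 2),
      show (2:ℝ) * (2:ℝ) ^ (2 * (s - 1)) = 2 ^ (1:ℝ) * 2 ^ (2 * (s - 1)) by rw [Real.rpow_one],
      ← Real.rpow_add (by norm_num : (0:ℝ) < 2)]
    congr 1
    ring
  rw [e1, e2, e3, ← mul_assoc, e4]

/-- **Decay of the constants a_k** (2.17). With ε = d−1−α > 0 and
h̄(z) ≤ C (1−z²)^{−α/2}, the angular moments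
a_k = ω_{d−2} ∫_{−1}^{1} ((1+z)/2)^k h̄(z) (1−z²)^{(d−3)/2} dz satisfy
a_k ≤ C ω_{d−2} 2^{ε−1} B(k+ε/2, ε/2) and hence a_k ≤ C'' k^{−ε/2}, where
B(x,y) = Γ(x)Γ(y)/Γ(x+y) is the Beta function. -/
theorem angular_moment_decay
    (d : ℕ) (hd : 2 ≤ d) (α C : ℝ) (hα : α < (d:ℝ) - 1) (hC : 0 ≤ C)
    (hbar : ℝ → ℝ) (hmeas : Measurable hbar)
    (hnn : ∀ z ∈ Ioo (-1:ℝ) 1, 0 ≤ hbar z)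
    (hbd : ∀ z ∈ Ioo (-1:ℝ) 1, hbar z ≤ C * (1 - z ^ 2) ^ (-(α / 2))) :
    (∀ k : ℝ, 1 ≤ k →
      omegaSphere d *
          ∫ z in Ioo (-1:ℝ) 1, ((1 + z) / 2) ^ k * hbar z * (1 - z ^ 2) ^ (((d:ℝ) - 3) / 2)
        ≤ C * omegaSphere d * 2 ^ (((d:ℝ) - 1 - α) - 1) *
            (Real.Gamma (k + ((d:ℝ) - 1 - α) / 2) * Real.Gamma (((d:ℝ) - 1 - α) / 2) /
              Real.Gamma (k + ((d:ℝ) - 1 - α)))) ∧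
    ∃ C'' : ℝ, ∀ k : ℝ, 1 ≤ k →
      omegaSphere d *
          ∫ z in Ioo (-1:ℝ) 1, ((1 + z) / 2) ^ k * hbar z * (1 - z ^ 2) ^ (((d:ℝ) - 3) / 2)
        ≤ C'' * k ^ (-(((d:ℝ) - 1 - α) / 2)) := by
  have hω : 0 ≤ omegaSphere d := ENNReal.toReal_nonneg
  set s : ℝ := ((d:ℝ) - 1 - α) / 2 with hsdef
  have hs : 0 < s := by rw [hsdef]; linarith
  have key : ∀ k : ℝ, 1 ≤ k →
      omegaSphere d *
          ∫ z in Ioo (-1:ℝ) 1, ((1 + z) / 2) ^ k * hbar z * (1 - z ^ 2) ^ (((d:ℝ) - 3) / 2)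
        ≤ C * omegaSphere d * 2 ^ (2 * s - 1) *
            ∫ t in Ioo (0:ℝ) 1, t ^ (k + s - 1) * (1 - t) ^ (s - 1) := by
    intro k hk
    have hk0 : (0:ℝ) ≤ k := by linarith
    have hgint : IntegrableOn
        (fun z : ℝ => C * (((1 + z) / 2) ^ k * (1 - z ^ 2) ^ (s - 1))) (Ioo (-1:ℝ) 1) :=
      (subst_integrableOn hs hk0).const_mul C
    have hmono : (∫ z in Ioo (-1:ℝ) 1,
          ((1 + z) / 2) ^ k * hbar z * (1 - z ^ 2) ^ (((d:ℝ) - 3) / 2))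
        ≤ ∫ z in Ioo (-1:ℝ) 1, C * (((1 + z) / 2) ^ k * (1 - z ^ 2) ^ (s - 1)) := by
      refine integral_mono_of_nonneg ?_ hgint ?_
      · filter_upwards [ae_restrict_mem measurableSet_Ioo] with z hz
        have hA : (0:ℝ) ≤ ((1 + z) / 2) ^ k :=
          Real.rpow_nonneg (by simp only [mem_Ioo] at hz; linarith [hz.1]) _
        have hP : (0:ℝ) < 1 - z ^ 2 := by
          simp only [mem_Ioo] at hz; nlinarith [hz.1, hz.2]
        exact mul_nonneg (mul_nonneg hA (hnn z hz)) (Real.rpow_nonneg hP.le _)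
      · filter_upwards [ae_restrict_mem measurableSet_Ioo] with z hz
        have hz' := hz
        simp only [mem_Ioo] at hz'
        have hA : (0:ℝ) ≤ ((1 + z) / 2) ^ k := Real.rpow_nonneg (by linarith [hz'.1]) _
        have hP : (0:ℝ) < 1 - z ^ 2 := by nlinarith [hz'.1, hz'.2]
        have hb := hbd z hz
        calc ((1 + z) / 2) ^ k * hbar z * (1 - z ^ 2) ^ (((d:ℝ) - 3) / 2)
            ≤ ((1 + z) / 2) ^ k * (C * (1 - z ^ 2) ^ (-(α / 2))) *
                (1 - z ^ 2) ^ (((d:ℝ) - 3) / 2) := by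
              refine mul_le_mul_of_nonneg_right ?_ (Real.rpow_nonneg hP.le _)
              exact mul_le_mul_of_nonneg_left hb hA
          _ = C * (((1 + z) / 2) ^ k * (1 - z ^ 2) ^ (s - 1)) := by
              rw [show s - 1 = -(α / 2) + ((d:ℝ) - 3) / 2 by rw [hsdef]; ring,
                  Real.rpow_add hP]
              ring
    have hval : ∫ z in Ioo (-1:ℝ) 1, C * (((1 + z) / 2) ^ k * (1 - z ^ 2) ^ (s - 1))
        = C * (2 ^ (2 * s - 1) * ∫ t in Ioo (0:ℝ) 1, t ^ (k + s - 1) * (1 - t) ^ (s - 1)) := by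
      rw [integral_const_mul, subst_eq hs]
    calc omegaSphere d *
          ∫ z in Ioo (-1:ℝ) 1, ((1 + z) / 2) ^ k * hbar z * (1 - z ^ 2) ^ (((d:ℝ) - 3) / 2)
        ≤ omegaSphere d *
            (C * (2 ^ (2 * s - 1) * ∫ t in Ioo (0:ℝ) 1, t ^ (k + s - 1) * (1 - t) ^ (s - 1))) :=
          mul_le_mul_of_nonneg_left (hmono.trans_eq hval) hω
      _ = C * omegaSphere d * 2 ^ (2 * s - 1) *
            ∫ t in Ioo (0:ℝ) 1, t ^ (k + s - 1) * (1 - t) ^ (s - 1) := by ring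
  have h2s : (d:ℝ) - 1 - α = 2 * s := by rw [hsdef]; ring
  constructor
  · intro k hk
    have h1 := key k hk
    rw [betaInt_eq' (show 0 < k + s by linarith) hs] at h1
    rw [h2s, show k + 2 * s = k + s + s by ring]
    exact h1
  · obtain ⟨K, hK0, hK⟩ := betaInt_bound' hs
    refine ⟨C * omegaSphere d * 2 ^ (2 * s - 1) * K, fun k hk => ?_⟩
    have h1 := key k hk
    have h2 := hK k hk
    have hc0 : 0 ≤ C * omegaSphere d * 2 ^ (2 * s - 1) := by positivity
    calc omegaSphere d *
          ∫ z in Ioo (-1:ℝ) 1, ((1 + z) / 2) ^ k * hbar z * (1 - z ^ 2) ^ (((d:ℝ) - 3) / 2)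
        ≤ C * omegaSphere d * 2 ^ (2 * s - 1) *
            ∫ t in Ioo (0:ℝ) 1, t ^ (k + s - 1) * (1 - t) ^ (s - 1) := h1
      _ ≤ C * omegaSphere d * 2 ^ (2 * s - 1) * (K * k ^ (-s)) :=
          mul_le_mul_of_nonneg_left h2 hc0
      _ = C * omegaSphere d * 2 ^ (2 * s - 1) * K * k ^ (-s) := by ring

end
end
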